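/- arXiv:2602.00764 — 5 statements merged into one kernel-verified Lean document; each statement's English description precedes it below -/
import Mathlib

section
/- Consequently, for any odd integer k ≥ 3, ζ*(k−1, 1) = ((k+1)/2) ζ(k) − Σ_{2 ≤ j ≤ k−2, j even} ζ(j) ζ(k−j). -/
open scoped BigOperators

noncomputable section

/-- The Riemann zeta value `ζ(s) = Σ_{n ≥ 1} 1/n^s`. -/
def zeta (s : ℕ) : ℝ := ∑' n : ℕ, 1 / ((n : ℝ) + 1) ^ s

/-- The double zeta-star value `ζ*(a,b) = Σ_{m ≥ n ≥ 1} 1/(m^a n^b)`. -/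
def zetaStar (a b : ℕ) : ℝ :=
  ∑' p : {q : ℕ × ℕ // q.2 ≤ q.1}, 1 / (((p.1.1 : ℝ) + 1) ^ a * ((p.1.2 : ℝ) + 1) ^ b)

/-- The double zeta value `ζ(a,b) = Σ_{m > n ≥ 1} 1/(m^a n^b)`. -/
def dzeta (a b : ℕ) : ℝ :=
  ∑' p : {q : ℕ × ℕ // q.2 < q.1}, 1 / (((p.1.1 : ℝ) + 1) ^ a * ((p.1.2 : ℝ) + 1) ^ b)

open scoped ENNReal

namespace EA
open ENNReal Finset Filter

def e (n : ℕ) : ℝ≥0∞ := (n : ℝ≥0∞) + 1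
def Z (s : ℕ) : ℝ≥0∞ := ∑' n : ℕ, (e n ^ s)⁻¹
def DS (a b : ℕ) : ℝ≥0∞ := ∑' p : {q : ℕ × ℕ // q.2 < q.1}, (e p.1.1 ^ a * e p.1.2 ^ b)⁻¹
def ZS (a b : ℕ) : ℝ≥0∞ := ∑' p : {q : ℕ × ℕ // q.2 ≤ q.1}, (e p.1.1 ^ a * e p.1.2 ^ b)⁻¹
def Hh (n : ℕ) : ℝ≥0∞ := ∑ i ∈ range (n+1), (e i)⁻¹

lemma e_ne_zero (n : ℕ) : e n ≠ 0 := by simp [e]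
lemma e_ne_top (n : ℕ) : e n ≠ ⊤ := by
  simp only [e, Ne, add_eq_top]; push_neg
  exact ⟨natCast_ne_top n, one_ne_top⟩
lemma e_toReal (n : ℕ) : (e n).toReal = (n : ℝ) + 1 := by
  simp [e, toReal_add (natCast_ne_top n) one_ne_top]
lemma e_eq_ofReal (n : ℕ) : e n = ENNReal.ofReal ((n:ℝ)+1) := by
  have : ((n:ℝ)+1) = ((n+1:ℕ):ℝ) := by push_cast; ring
  rw [this, ENNReal.ofReal_natCast]; simp [e]
lemma one_le_e (n : ℕ) : 1 ≤ e n := by simp [e]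


def diag_equiv : ℕ ≃ {q : ℕ × ℕ // q.1 = q.2} :=
  ⟨fun n => ⟨(n, n), rfl⟩, fun p => p.1.1, fun n => rfl,
   fun p => by rcases p with ⟨⟨a,b⟩, h⟩; simp only at h; subst h; rfl⟩

lemma tsum_diag (f : ℕ × ℕ → ℝ≥0∞) :
    ∑' n : ℕ, f (n, n) = ∑' p : {q : ℕ × ℕ // q.1 = q.2}, f p.1 :=
  diag_equiv.tsum_eq (fun p : {q : ℕ × ℕ // q.1 = q.2} => f p.1)

lemma tsum_split_le (f : ℕ × ℕ → ℝ≥0∞) :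
    ∑' p : {q : ℕ × ℕ // q.2 ≤ q.1}, f p.1 =
      (∑' p : {q : ℕ × ℕ // q.2 < q.1}, f p.1) + ∑' n : ℕ, f (n, n) := by
  rw [tsum_diag]; erw [
    _root_.tsum_subtype {q : ℕ × ℕ | q.2 ≤ q.1} f,
    _root_.tsum_subtype {q : ℕ × ℕ | q.2 < q.1} f,
    _root_.tsum_subtype {q : ℕ × ℕ | q.1 = q.2} f,
    ← ENNReal.tsum_add]
  congr 1; funext p
  rcases p with ⟨a, b⟩
  by_cases h1 : b < a
  · simp [Set.indicator, h1, le_of_lt h1, (ne_of_gt h1)]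
  · by_cases h2 : a = b
    · subst h2; simp [Set.indicator, h1]
    · have : ¬ b ≤ a := fun h => h2 (le_antisymm (not_lt.mp h1) h)
      simp [Set.indicator, h1, h2, this]

lemma tsum_split_full (f : ℕ × ℕ → ℝ≥0∞) :
    ∑' p : ℕ × ℕ, f p =
      (∑' p : {q : ℕ × ℕ // q.2 < q.1}, f p.1) +
      (∑' p : {q : ℕ × ℕ // q.1 < q.2}, f p.1) + ∑' n : ℕ, f (n, n) := by
  rw [tsum_diag]; erw [
    _root_.tsum_subtype {q : ℕ × ℕ | q.2 < q.1} f,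
    _root_.tsum_subtype {q : ℕ × ℕ | q.1 < q.2} f,
    _root_.tsum_subtype {q : ℕ × ℕ | q.1 = q.2} f,
    ← ENNReal.tsum_add, ← ENNReal.tsum_add]
  congr 1; funext p
  rcases p with ⟨a, b⟩
  rcases lt_trichotomy a b with h | h | h
  · simp [Set.indicator, h, asymm h, ne_of_lt h]
  · subst h; simp [Set.indicator, lt_irrefl]
  · simp [Set.indicator, h, asymm h, (ne_of_gt h)]



lemma ZS_eq (a b : ℕ) : ZS a b = DS a b + Z (a + b) := by
  rw [ZS, DS, tsum_split_le (fun q => (e q.1 ^ a * e q.2 ^ b)⁻¹)]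
  congr 1
  rw [Z]
  congr 1; funext n; rw [← pow_add]

def swap_equiv : {q : ℕ × ℕ // q.1 < q.2} ≃ {q : ℕ × ℕ // q.2 < q.1} :=
  ⟨fun p => ⟨(p.1.2, p.1.1), p.2⟩, fun p => ⟨(p.1.2, p.1.1), p.2⟩,
   fun p => rfl, fun p => rfl⟩

lemma stuffle (a b : ℕ) : Z a * Z b = DS a b + DS b a + Z (a + b) := by
  have h1 : Z a * Z b = ∑' p : ℕ × ℕ, (e p.1 ^ a * e p.2 ^ b)⁻¹ := by
    rw [ENNReal.tsum_prod']
    rw [Z, Z, ← ENNReal.tsum_mul_right]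
    congr 1; funext m
    rw [← ENNReal.tsum_mul_left]
    congr 1; funext n
    rw [ENNReal.mul_inv (Or.inl (pow_ne_zero a (e_ne_zero m)))
      (Or.inl (fun h => (pow_ne_top (e_ne_top m)) h))]
  rw [h1, tsum_split_full (fun q => (e q.1 ^ a * e q.2 ^ b)⁻¹)]
  congr 1
  · congr 1
    rw [DS, ← swap_equiv.tsum_eq (fun p : {q : ℕ × ℕ // q.2 < q.1} => (e p.1.1 ^ b * e p.1.2 ^ a)⁻¹)]
    congr 1; funext p; rw [mul_comm]; rfl
  · rw [Z]; congr 1; funext n; rw [← pow_add]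



lemma real_key (N : ℕ) (y δ : ℝ) (hy : 0 < y) (hδ : 0 < δ) :
    ∑ i ∈ Finset.range (N+1), 1/((y+δ)^(i+2) * y^(N+1-i)) + 1/(δ * (y+δ)^(N+2))
      = 1/(δ * (y+δ) * y^(N+1)) := by
  induction N with
  | zero =>
    rw [Finset.sum_range_one]
    norm_num
    have hx : 0 < y + δ := by positivity
    field_simp
    ring
  | succ N ih =>
    have hx : 0 < y + δ := by positivity
    rw [Finset.sum_range_succ]
    have hre : ∀ i ∈ Finset.range (N+1),
        1/((y+δ)^(i+2) * y^(N+2-i)) = (1/y) * (1/((y+δ)^(i+2) * y^(N+1-i))) := by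
      intro i hi
      have hiN : i ≤ N := by simpa using Nat.lt_succ_iff.mp (Finset.mem_range.mp hi)
      have : N + 2 - i = (N + 1 - i) + 1 := by omega
      rw [this, pow_succ]
      field_simp
      ring
    have hsum : ∑ i ∈ Finset.range (N+1), 1/((y+δ)^(i+2) * y^(N+2-i))
        = (1/y) * (1/(δ * (y+δ) * y^(N+1)) - 1/(δ * (y+δ)^(N+2))) := by
      rw [Finset.sum_congr rfl hre, ← Finset.mul_sum]
      congr 1
      linarith [ih]
    have h2 : N + 2 - (N + 1) = 1 := by omega
    rw [hsum, h2]
    have h1 : (y+δ)^(N+3) = (y+δ)^(N+2) * (y+δ) := by ring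
    field_simp
    ring


lemma pair_key (k m n : ℕ) (hk : 3 ≤ k) (hmn : n < m) :
    ∑ j ∈ Icc 2 (k-1), (e m ^ j * e n ^ (k-j))⁻¹ + (((m-n : ℕ) : ℝ≥0∞) * e m ^ (k-1))⁻¹
      = (((m-n : ℕ) : ℝ≥0∞) * e m * e n ^ (k-2))⁻¹ := by
  have hd0 : ((m-n : ℕ) : ℝ≥0∞) ≠ 0 := by
    simp only [Ne, Nat.cast_eq_zero]; omega
  have hdt : ((m-n : ℕ) : ℝ≥0∞) ≠ ⊤ := natCast_ne_top _
  have hterm : ∀ j, (e m ^ j * e n ^ (k-j))⁻¹ ≠ (⊤ : ℝ≥0∞) := fun j =>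
    inv_ne_top.mpr (mul_ne_zero (pow_ne_zero _ (e_ne_zero m)) (pow_ne_zero _ (e_ne_zero n)))
  have hL : ∑ j ∈ Icc 2 (k-1), (e m ^ j * e n ^ (k-j))⁻¹ + (((m-n:ℕ):ℝ≥0∞) * e m ^ (k-1))⁻¹ ≠ ⊤ :=
    add_ne_top.mpr ⟨sum_ne_top.mpr (fun j _ => hterm j),
      inv_ne_top.mpr (mul_ne_zero hd0 (pow_ne_zero _ (e_ne_zero m)))⟩
  have hR : (((m-n:ℕ):ℝ≥0∞) * e m * e n ^ (k-2))⁻¹ ≠ (⊤:ℝ≥0∞) :=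
    inv_ne_top.mpr (mul_ne_zero (mul_ne_zero hd0 (e_ne_zero m)) (pow_ne_zero _ (e_ne_zero n)))
  rw [← ENNReal.toReal_eq_toReal_iff' hL hR]
  rw [ENNReal.toReal_add (sum_ne_top.mpr (fun j _ => hterm j))
    (inv_ne_top.mpr (mul_ne_zero hd0 (pow_ne_zero _ (e_ne_zero m)))),
    ENNReal.toReal_sum (fun j _ => hterm j)]
  simp only [ENNReal.toReal_inv, ENNReal.toReal_mul, ENNReal.toReal_pow, e_toReal,
    ENNReal.toReal_natCast]
  -- now a real identity
  have key := real_key (k-3) ((n:ℝ)+1) ((m-n:ℕ):ℝ) (by positivity)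
    (by simp only [Nat.cast_pos]; omega)
  have hyd : ((n:ℝ)+1) + ((m-n:ℕ):ℝ) = (m:ℝ)+1 := by
    rw [Nat.cast_sub hmn.le]; ring
  rw [hyd] at key
  have h1 : k - 3 + 1 = k - 2 := by omega
  have h2 : k - 3 + 2 = k - 1 := by omega
  rw [h1, h2] at key
  rw [← Finset.Ico_add_one_right_eq_Icc, Finset.sum_Ico_eq_sum_range] at *
  have h3 : k - 1 + 1 - 2 = k - 2 := by omega
  rw [h3]
  simp only [one_div] at key
  have hsc : ∀ i ∈ Finset.range (k-2),
      (((m:ℝ)+1) ^ (2+i) * ((n:ℝ)+1) ^ (k - (2+i)))⁻¹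
        = (((m:ℝ)+1) ^ (i+2) * ((n:ℝ)+1) ^ (k - 3 + 1 - i))⁻¹ := by
    intro i hi
    have hik : i < k - 2 := Finset.mem_range.mp hi
    have h4 : k - (2 + i) = k - 3 + 1 - i := by omega
    have h5 : 2 + i = i + 2 := by omega
    rw [h4, h5]
  rw [Finset.sum_congr rfl hsc, h1]
  convert key using 2


lemma psum_closed (n : ℕ) (D : ℕ) :
    ∑ d ∈ range D, (((d:ℝ)+1) * ((d:ℝ)+(n:ℝ)+2))⁻¹
      = (((n:ℝ)+1))⁻¹ * ∑ i ∈ range (n+1), (((i:ℝ)+1)⁻¹ - ((D:ℝ)+(i:ℝ)+1)⁻¹) := by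
  induction D with
  | zero => simp
  | succ D ih =>
    rw [Finset.sum_range_succ, ih]
    have tele : ∑ i ∈ range (n+1), (((D:ℝ)+(i:ℝ)+1)⁻¹ - ((D:ℝ)+(i:ℝ)+2)⁻¹)
        = ((D:ℝ)+1)⁻¹ - ((D:ℝ)+(n:ℝ)+2)⁻¹ := by
      have h := Finset.sum_range_sub' (fun i : ℕ => ((D:ℝ)+(i:ℝ)+1)⁻¹) (n+1)
      push_cast at h
      rw [show ((D:ℝ)+1)⁻¹ - ((D:ℝ)+(n:ℝ)+2)⁻¹ = ((D:ℝ)+0+1)⁻¹ - ((D:ℝ)+((n:ℝ)+1)+1)⁻¹ by ring_nf,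
        ← h]
      apply Finset.sum_congr rfl; intro i _; ring_nf
    have hsplit : ∑ i ∈ range (n+1), (((i:ℝ)+1)⁻¹ - (((D+1:ℕ):ℝ)+(i:ℝ)+1)⁻¹)
        = ∑ i ∈ range (n+1), (((i:ℝ)+1)⁻¹ - ((D:ℝ)+(i:ℝ)+1)⁻¹)
          + ∑ i ∈ range (n+1), (((D:ℝ)+(i:ℝ)+1)⁻¹ - ((D:ℝ)+(i:ℝ)+2)⁻¹) := by
      rw [← Finset.sum_add_distrib]
      apply Finset.sum_congr rfl
      intro i _
      push_cast; ring
    rw [hsplit, tele]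
    have hD1 : (D:ℝ)+1 ≠ 0 := by positivity
    have hDn2 : (D:ℝ)+(n:ℝ)+2 ≠ 0 := by positivity
    have hn1 : (n:ℝ)+1 ≠ 0 := by positivity
    field_simp
    ring

lemma inner_hasSum (n : ℕ) :
    HasSum (fun d : ℕ => (((d:ℝ)+1) * ((d:ℝ)+(n:ℝ)+2))⁻¹)
      ((((n:ℝ)+1))⁻¹ * ∑ i ∈ range (n+1), ((i:ℝ)+1)⁻¹) := by
  have hsq : Summable (fun d : ℕ => (((d:ℝ)+1)^2)⁻¹) := by
    have := Real.summable_one_div_nat_pow.mpr (show 1 < 2 by norm_num)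
    have h2 := (summable_nat_add_iff 1).mpr this
    simpa [one_div] using h2.congr (fun d => by push_cast; norm_num)
  have hs : Summable (fun d : ℕ => (((d:ℝ)+1) * ((d:ℝ)+(n:ℝ)+2))⁻¹) := by
    apply Summable.of_nonneg_of_le (fun d => by positivity) _ hsq
    intro d
    apply inv_anti₀ (by positivity)
    nlinarith [Nat.cast_nonneg (α := ℝ) d, Nat.cast_nonneg (α := ℝ) n]
  rw [hs.hasSum_iff_tendsto_nat]
  simp only [psum_closed]
  have hlim : ∀ i : ℕ, Tendsto (fun D : ℕ => ((D:ℝ)+(i:ℝ)+1)⁻¹) atTop (nhds 0) := by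
    intro i
    apply Tendsto.inv_tendsto_atTop
    exact tendsto_atTop_add_const_right _ 1
      (tendsto_atTop_add_const_right _ (i:ℝ) (tendsto_natCast_atTop_atTop (R := ℝ)))
  have hlim2 : Tendsto (fun D : ℕ => ∑ i ∈ range (n+1), (((i:ℝ)+1)⁻¹ - ((D:ℝ)+(i:ℝ)+1)⁻¹)) atTop
      (nhds (∑ i ∈ range (n+1), (((i:ℝ)+1)⁻¹ - 0))) := by
    apply tendsto_finset_sum
    intro i _
    exact (tendsto_const_nhds).sub (hlim i)
  simp only [sub_zero] at hlim2
  exact Tendsto.const_mul _ hlim2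


lemma inner_ennreal (n : ℕ) :
    ∑' d : ℕ, (((d:ℝ≥0∞)+1) * ((d:ℝ≥0∞)+(n:ℝ≥0∞)+2))⁻¹ = (e n)⁻¹ * Hh n := by
  have hterm : ∀ d : ℕ, (((d:ℝ≥0∞)+1) * ((d:ℝ≥0∞)+(n:ℝ≥0∞)+2))⁻¹
      = ENNReal.ofReal ((((d:ℝ)+1) * ((d:ℝ)+(n:ℝ)+2))⁻¹) := by
    intro d
    have hA : ((d:ℝ≥0∞)+1) = ((d+1:ℕ):ℝ≥0∞) := by push_cast; ring
    have hB : ((d:ℝ≥0∞)+(n:ℝ≥0∞)+2) = ((d+n+2:ℕ):ℝ≥0∞) := by push_cast; ring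
    rw [hA, hB, ← ENNReal.ofReal_natCast (d+1), ← ENNReal.ofReal_natCast (d+n+2),
      ← ENNReal.ofReal_mul (by positivity), ← ENNReal.ofReal_inv_of_pos (by positivity)]
    congr 1
    push_cast; ring
  rw [tsum_congr hterm, ← ENNReal.ofReal_tsum_of_nonneg (fun d => by positivity)
    (inner_hasSum n).summable, (inner_hasSum n).tsum_eq,
    ENNReal.ofReal_mul (by positivity), ENNReal.ofReal_inv_of_pos (by positivity),
    ENNReal.ofReal_sum_of_nonneg (fun i _ => by positivity)]
  congr 1
  · rw [← e_eq_ofReal]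
  · rw [Hh]
    apply Finset.sum_congr rfl
    intro i _
    rw [ENNReal.ofReal_inv_of_pos (by positivity), ← e_eq_ofReal]

def rowEquiv : (Σ m : ℕ, {n // n ∈ Finset.range (m+1)}) ≃ {q : ℕ × ℕ // q.2 ≤ q.1} :=
  { toFun := fun x => ⟨(x.1, x.2.1), Nat.lt_succ_iff.mp (Finset.mem_range.mp x.2.2)⟩
    invFun := fun p => ⟨p.1.1, ⟨p.1.2, Finset.mem_range.mpr (Nat.lt_succ_iff.mpr p.2)⟩⟩
    left_inv := fun x => rfl
    right_inv := fun p => rfl }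

lemma ZS_row (a : ℕ) : ZS a 1 = ∑' m : ℕ, (e m ^ a)⁻¹ * Hh m := by
  rw [ZS, ← rowEquiv.tsum_eq, ENNReal.tsum_sigma']
  apply tsum_congr
  intro m
  show ∑' (n : {n // n ∈ Finset.range (m+1)}), (e m ^ a * e n.1 ^ 1)⁻¹ = _
  calc ∑' (n : {n // n ∈ Finset.range (m+1)}), (e m ^ a * e n.1 ^ 1)⁻¹
      = ∑ n ∈ Finset.range (m+1), (e m ^ a * e n ^ 1)⁻¹ :=
        Finset.tsum_subtype (Finset.range (m+1)) (fun n => (e m ^ a * e n ^ 1)⁻¹)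
    _ = ∑ n ∈ Finset.range (m+1), (e m ^ a)⁻¹ * (e n)⁻¹ := by
        apply Finset.sum_congr rfl; intro n _
        rw [pow_one, ENNReal.mul_inv (Or.inl (pow_ne_zero _ (e_ne_zero m)))
          (Or.inl (pow_ne_top (e_ne_top m)))]
    _ = (e m ^ a)⁻¹ * Hh m := by rw [← Finset.mul_sum, Hh]

def shift_equiv : ℕ × ℕ ≃ {q : ℕ × ℕ // q.2 < q.1} :=
  { toFun := fun x => ⟨(x.2 + x.1 + 1, x.2), by omega⟩
    invFun := fun p => (p.1.1 - p.1.2 - 1, p.1.2)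
    left_inv := fun x => by
      obtain ⟨a, b⟩ := x
      simp only
      congr 1 <;> omega
    right_inv := fun p => by
      obtain ⟨⟨m, n⟩, h⟩ := p
      have h' : n < m := h
      refine Subtype.ext (Prod.ext ?_ ?_)
      · show n + (m - n - 1) + 1 = m
        omega
      · rfl }

lemma BB_eq (k : ℕ) (hk : 3 ≤ k) :
    ∑' p : {q : ℕ × ℕ // q.2 < q.1},
        (((p.1.1 - p.1.2 : ℕ) : ℝ≥0∞) * e p.1.1 * e p.1.2 ^ (k-2))⁻¹ = ZS (k-1) 1 := by
  rw [← shift_equiv.tsum_eq, ENNReal.tsum_prod', ZS_row]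
  -- outer index: first coord of product is d, second is n? check: tsum_prod': ∑' a b, f (a,b)
  -- shift_equiv (a,b) = (b+a+1, b); so f(a,b) has m = b+a+1, n = b.  Sum over a then b.
  rw [ENNReal.tsum_comm]
  congr 1; funext n
  have hterm : ∀ d : ℕ,
      ((((n + d + 1) - n : ℕ) : ℝ≥0∞) * e (n + d + 1) * e n ^ (k-2))⁻¹
        = (e n ^ (k-2))⁻¹ * (((d:ℝ≥0∞)+1) * ((d:ℝ≥0∞)+(n:ℝ≥0∞)+2))⁻¹ := by
    intro d
    have h1 : ((n + d + 1) - n : ℕ) = d + 1 := by omega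
    have h2 : e (n + d + 1) = (d:ℝ≥0∞)+(n:ℝ≥0∞)+2 := by
      simp only [e]; push_cast; ring
    rw [h1, h2]
    rw [mul_comm (((d+1:ℕ):ℝ≥0∞) * _) (e n ^ (k-2)),
      ENNReal.mul_inv (Or.inl (pow_ne_zero _ (e_ne_zero n)))
        (Or.inl (pow_ne_top (e_ne_top n)))]
    congr 2
    push_cast; ring
  calc ∑' d : ℕ, ((((n + d + 1) - n : ℕ) : ℝ≥0∞) * e (n + d + 1) * e n ^ (k-2))⁻¹
      = ∑' d : ℕ, (e n ^ (k-2))⁻¹ * (((d:ℝ≥0∞)+1) * ((d:ℝ≥0∞)+(n:ℝ≥0∞)+2))⁻¹ :=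
        tsum_congr hterm
    _ = (e n ^ (k-2))⁻¹ * ((e n)⁻¹ * Hh n) := by rw [ENNReal.tsum_mul_left, inner_ennreal]
    _ = (e n ^ (k-1))⁻¹ * Hh n := by
        rw [← mul_assoc, ← ENNReal.mul_inv (Or.inl (pow_ne_zero _ (e_ne_zero n)))
          (Or.inl (pow_ne_top (e_ne_top n))), ← pow_succ]
        congr 3
        omega

def sub_equiv : {q : ℕ × ℕ // q.2 < q.1} ≃ {q : ℕ × ℕ // q.2 < q.1} :=
  { toFun := fun p => ⟨(p.1.1, p.1.1 - p.1.2 - 1), by have := p.2; omega⟩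
    invFun := fun p => ⟨(p.1.1, p.1.1 - p.1.2 - 1), by have := p.2; omega⟩
    left_inv := fun p => by
      obtain ⟨⟨m, n⟩, h⟩ := p
      have h' : n < m := h
      refine Subtype.ext (Prod.ext rfl ?_)
      show m - (m - n - 1) - 1 = n
      omega
    right_inv := fun p => by
      obtain ⟨⟨m, n⟩, h⟩ := p
      have h' : n < m := h
      refine Subtype.ext (Prod.ext rfl ?_)
      show m - (m - n - 1) - 1 = n
      omega }

lemma AA_eq (k : ℕ) :
    ∑' p : {q : ℕ × ℕ // q.2 < q.1},
        (((p.1.1 - p.1.2 : ℕ) : ℝ≥0∞) * e p.1.1 ^ (k-1))⁻¹ = DS (k-1) 1 := by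
  rw [DS, ← sub_equiv.tsum_eq]
  apply tsum_congr
  intro p
  rcases p with ⟨⟨m, n⟩, h⟩
  simp only [sub_equiv, Equiv.coe_fn_mk]
  rw [pow_one, mul_comm (e m ^ (k-1)) _]
  congr 2
  simp only [e]
  have : m - (m - n - 1) = n + 1 := by omega
  rw [this]
  push_cast; ring


lemma main1 (k : ℕ) (hk : 3 ≤ k) :
    ∑ j ∈ Icc 2 (k-1), DS j (k-j) + DS (k-1) 1 = ZS (k-1) 1 := by
  have h1 : ∑ j ∈ Icc 2 (k-1), DS j (k-j)
      = ∑' p : {q : ℕ×ℕ // q.2 < q.1}, ∑ j ∈ Icc 2 (k-1), (e p.1.1 ^ j * e p.1.2 ^ (k-j))⁻¹ :=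
    (Summable.tsum_finsetSum (fun j _ => ENNReal.summable)).symm
  rw [h1, ← AA_eq k, ← ENNReal.tsum_add, ← BB_eq k hk]
  exact tsum_congr (fun p => pair_key k p.1.1 p.1.2 hk p.2)

lemma Z2_summable : Summable (fun n : ℕ => (((n:ℝ)+1)^2)⁻¹) := by
  have := Real.summable_one_div_nat_pow.mpr (show 1 < 2 by norm_num)
  have h2 := (summable_nat_add_iff 1).mpr this
  simpa [one_div] using h2.congr (fun d => by push_cast; norm_num)

lemma epow_inv_ofReal (n s : ℕ) : (e n ^ s)⁻¹ = ENNReal.ofReal ((((n:ℝ)+1)^s)⁻¹) := by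
  rw [ENNReal.ofReal_inv_of_pos (by positivity), ENNReal.ofReal_pow (by positivity),
    ← e_eq_ofReal]

lemma Z_ne_top {s : ℕ} (hs : 2 ≤ s) : Z s ≠ ⊤ := by
  have hle : Z s ≤ Z 2 := by
    apply ENNReal.tsum_le_tsum
    intro n
    exact ENNReal.inv_le_inv.mpr (pow_le_pow_right₀ (one_le_e n) hs)
  have hZ2 : Z 2 ≠ ⊤ := by
    rw [Z]
    have : ∀ n : ℕ, (e n ^ 2)⁻¹ = ENNReal.ofReal ((((n:ℝ)+1)^2)⁻¹) :=
      fun n => epow_inv_ofReal n 2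
    rw [tsum_congr this, ← ENNReal.ofReal_tsum_of_nonneg (fun n => by positivity) Z2_summable]
    exact ofReal_ne_top
  exact fun h => hZ2 (top_le_iff.mp (h ▸ hle))

lemma g32_summable : Summable (fun n : ℕ => ((n:ℝ)+1) ^ (-(3/2 : ℝ))) := by
  have := Real.summable_one_div_nat_rpow.mpr (show 1 < (3/2:ℝ) by norm_num)
  have h2 := (summable_nat_add_iff 1).mpr this
  apply h2.congr
  intro d
  rw [Real.rpow_neg (by positivity), one_div]
  push_cast
  ring_nf

def g32 (n : ℕ) : ℝ≥0∞ := ENNReal.ofReal (((n:ℝ)+1) ^ (-(3/2 : ℝ)))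

lemma g32_tsum_ne_top : ∑' n : ℕ, g32 n ≠ ⊤ := by
  simp only [g32]
  rw [← ENNReal.ofReal_tsum_of_nonneg (fun n => Real.rpow_nonneg (by positivity) _) g32_summable]
  exact ofReal_ne_top

lemma ZS_ne_top (k : ℕ) (hk : 3 ≤ k) : ZS (k-1) 1 ≠ ⊤ := by
  have hbound : ∀ p : {q : ℕ × ℕ // q.2 ≤ q.1},
      (e p.1.1 ^ (k-1) * e p.1.2 ^ 1)⁻¹ ≤ g32 p.1.1 * g32 p.1.2 := by
    rintro ⟨⟨m, n⟩, hnm⟩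
    simp only
    set M : ℝ := (m:ℝ)+1 with hM
    set N : ℝ := (n:ℝ)+1 with hN
    have hM1 : 1 ≤ M := by simp [hM]
    have hN1 : 1 ≤ N := by simp [hN]
    have hNM : N ≤ M := by simp [hM, hN]; exact_mod_cast hnm
    have hMpos : (0:ℝ) < M := by linarith
    have hNpos : (0:ℝ) < N := by linarith
    have hreal : ((M^(k-1) * N^1)⁻¹ : ℝ) ≤ M ^ (-(3/2:ℝ)) * N ^ (-(3/2:ℝ)) := by
      rw [Real.rpow_neg hMpos.le, Real.rpow_neg hNpos.le, ← mul_inv, pow_one]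
      apply inv_anti₀ (by positivity)
      have key1 : M ^ ((3/2):ℝ) * N ^ ((3/2):ℝ) ≤ M ^ (2:ℝ) * N := by
        have e1 : N ^ ((3/2):ℝ) = N ^ ((1/2):ℝ) * N := by
          rw [show ((3/2):ℝ) = 1/2 + 1 by norm_num, Real.rpow_add hNpos, Real.rpow_one]
        have e2 : M ^ (2:ℝ) = M ^ ((3/2):ℝ) * M ^ ((1/2):ℝ) := by
          rw [← Real.rpow_add hMpos]; norm_num
        rw [e1, e2]
        have : N ^ ((1/2):ℝ) ≤ M ^ ((1/2):ℝ) :=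
          Real.rpow_le_rpow hNpos.le hNM (by norm_num)
        calc M ^ ((3/2):ℝ) * (N ^ ((1/2):ℝ) * N)
            ≤ M ^ ((3/2):ℝ) * (M ^ ((1/2):ℝ) * N) := by
              apply mul_le_mul_of_nonneg_left _ (by positivity)
              exact mul_le_mul_of_nonneg_right this hNpos.le
          _ = M ^ ((3/2):ℝ) * M ^ ((1/2):ℝ) * N := by ring
      have key2 : M ^ (2:ℝ) * N ≤ M^(k-1) * N := by
        apply mul_le_mul_of_nonneg_right _ hNpos.le
        rw [show (2:ℝ) = ((2:ℕ):ℝ) by norm_num, Real.rpow_natCast]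
        exact pow_le_pow_right₀ hM1 (by omega)
      exact key1.trans key2
    calc (e m ^ (k-1) * e n ^ 1)⁻¹
        = ENNReal.ofReal ((M^(k-1) * N^1)⁻¹) := by
          rw [ENNReal.ofReal_inv_of_pos (by positivity),
            ENNReal.ofReal_mul (by positivity),
            ENNReal.ofReal_pow (by positivity), ENNReal.ofReal_pow (by positivity),
            ← e_eq_ofReal, ← e_eq_ofReal]
      _ ≤ ENNReal.ofReal (M ^ (-(3/2:ℝ)) * N ^ (-(3/2:ℝ))) := ENNReal.ofReal_le_ofReal hreal
      _ = g32 m * g32 n := by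
          rw [ENNReal.ofReal_mul (Real.rpow_nonneg hMpos.le _)]; rfl
  have h1 : ZS (k-1) 1 ≤ ∑' p : {q : ℕ × ℕ // q.2 ≤ q.1}, g32 p.1.1 * g32 p.1.2 :=
    ENNReal.tsum_le_tsum hbound
  have h2 : ∑' p : {q : ℕ × ℕ // q.2 ≤ q.1}, g32 p.1.1 * g32 p.1.2
      ≤ ∑' p : ℕ × ℕ, g32 p.1 * g32 p.2 := by
    have heq := _root_.tsum_subtype {q : ℕ × ℕ | q.2 ≤ q.1} (fun p => g32 p.1 * g32 p.2)
    rw [show (∑' p : {q : ℕ × ℕ // q.2 ≤ q.1}, g32 p.1.1 * g32 p.1.2)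
        = ∑' x : ℕ × ℕ, Set.indicator {q : ℕ × ℕ | q.2 ≤ q.1} (fun p => g32 p.1 * g32 p.2) x
      from heq]
    exact ENNReal.tsum_le_tsum (fun p => Set.indicator_le_self _ _ p)
  have h3 : ∑' p : ℕ × ℕ, g32 p.1 * g32 p.2 = (∑' n, g32 n) * (∑' n, g32 n) := by
    rw [ENNReal.tsum_prod']
    simp_rw [ENNReal.tsum_mul_left, ENNReal.tsum_mul_right]
  intro htop
  have hT : (∑' n, g32 n) * (∑' n, g32 n) = ⊤ := top_le_iff.mp (htop ▸ (h1.trans (h2.trans_eq h3)))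
  rcases ENNReal.mul_eq_top.mp hT with ⟨_, h⟩ | ⟨h, _⟩ <;> exact g32_tsum_ne_top h

lemma sum_thm (k : ℕ) (hk : 3 ≤ k) : ∑ j ∈ Icc 2 (k-1), DS j (k-j) = Z k := by
  have h := main1 k hk
  have hZS := ZS_eq (k-1) 1
  rw [show k-1+1 = k by omega] at hZS
  have hD : DS (k-1) 1 ≠ ⊤ := by
    intro hDt
    exact ZS_ne_top k hk (by rw [hZS, hDt, top_add])
  rw [hZS] at h
  rw [add_comm] at h
  exact (ENNReal.add_right_inj hD).mp h



lemma main2 (k : ℕ) (hk : 3 ≤ k) :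
    2 * ZS (k-1) 1 + ∑ j ∈ Icc 2 (k-2), Z j * Z (k-j)
      = ((k+1:ℕ) : ℝ≥0∞) * Z k := by
  have hZS : ZS (k-1) 1 = DS (k-1) 1 + Z k := by
    rw [ZS_eq, show k-1+1 = k by omega]
  have hst : ∀ j ∈ Icc 2 (k-2), Z j * Z (k-j) = DS j (k-j) + DS (k-j) j + Z k := by
    intro j hj
    rw [mem_Icc] at hj
    rw [stuffle, Nat.add_sub_cancel' (by omega : j ≤ k)]
  have hswap : ∑ j ∈ Icc 2 (k-2), DS (k-j) j = ∑ j ∈ Icc 2 (k-2), DS j (k-j) := by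
    apply Finset.sum_nbij' (fun j => k - j) (fun j => k - j)
    · intro a ha; rw [mem_Icc] at *; omega
    · intro a ha; rw [mem_Icc] at *; omega
    · intro a ha; rw [mem_Icc] at ha; omega
    · intro a ha; rw [mem_Icc] at ha; omega
    · intro a ha
      rw [mem_Icc] at ha
      rw [show k - (k - a) = a by omega]
  have hsum : ∑ j ∈ Icc 2 (k-2), Z j * Z (k-j)
      = ∑ j ∈ Icc 2 (k-2), DS j (k-j) + ∑ j ∈ Icc 2 (k-2), DS (k-j) j
        + ((k-3:ℕ) : ℝ≥0∞) * Z k := by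
    rw [Finset.sum_congr rfl hst, Finset.sum_add_distrib, Finset.sum_add_distrib,
      Finset.sum_const, Nat.card_Icc, nsmul_eq_mul]
    congr 2 <;> omega
  have hsplit : ∑ j ∈ Icc 2 (k-1), DS j (k-j)
      = ∑ j ∈ Icc 2 (k-2), DS j (k-j) + DS (k-1) 1 := by
    rw [show k-1 = (k-2)+1 by omega, Finset.sum_Icc_succ_top (by omega : 2 ≤ (k-2)+1)]
    rw [show k - ((k-2)+1) = 1 by omega, show (k-2)+1 = k-1 by omega]
  set S : ℝ≥0∞ := ∑ j ∈ Icc 2 (k-2), DS j (k-j) with hS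
  have hst2 : S + DS (k-1) 1 = Z k := by rw [← hsplit]; exact sum_thm k hk
  rw [hsum, hswap, hZS]
  calc 2 * (DS (k-1) 1 + Z k) + (S + S + ((k-3:ℕ):ℝ≥0∞) * Z k)
      = 2 * (S + DS (k-1) 1) + (2 * Z k + ((k-3:ℕ):ℝ≥0∞) * Z k) := by ring
    _ = 2 * Z k + (2 * Z k + ((k-3:ℕ):ℝ≥0∞) * Z k) := by rw [hst2]
    _ = (((k-3:ℕ):ℝ≥0∞) + 4) * Z k := by ring
    _ = ((k+1:ℕ) : ℝ≥0∞) * Z k := by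
        congr 1
        rw [show (4:ℝ≥0∞) = ((4:ℕ):ℝ≥0∞) by norm_cast, ← Nat.cast_add]
        congr 1
        omega


lemma Z_toReal (s : ℕ) : (Z s).toReal = zeta s := by
  rw [Z, zeta, ENNReal.tsum_toReal_eq
    (fun n => inv_ne_top.mpr (pow_ne_zero _ (e_ne_zero n)))]
  apply tsum_congr
  intro n
  rw [ENNReal.toReal_inv, ENNReal.toReal_pow, e_toReal, one_div]

lemma ZS_toReal (a b : ℕ) : (ZS a b).toReal = zetaStar a b := by
  rw [ZS, zetaStar, ENNReal.tsum_toReal_eq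
    (fun p => inv_ne_top.mpr (mul_ne_zero (pow_ne_zero _ (e_ne_zero _))
      (pow_ne_zero _ (e_ne_zero _))))]
  apply tsum_congr
  intro p
  rw [ENNReal.toReal_inv, ENNReal.toReal_mul, ENNReal.toReal_pow, ENNReal.toReal_pow,
    e_toReal, e_toReal, one_div]



end EA


open Finset EA ENNReal in
/-- For odd `k ≥ 3`, `ζ*(k−1,1) = ((k+1)/2) ζ(k) − Σ_{2 ≤ j ≤ k−2, j even} ζ(j) ζ(k−j)`. -/
theorem zetaStar_formula_even (k : ℕ) (hk : Odd k) (h3 : 3 ≤ k) :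
    zetaStar (k - 1) 1 =
      ((k : ℝ) + 1) / 2 * zeta k -
        ∑ j ∈ (Finset.Icc 2 (k - 2)).filter (fun j => Even j), zeta j * zeta (k - j) := by
  have hZj : ∀ j ∈ Icc 2 (k-2), (Z j * Z (k-j)) ≠ ⊤ := by
    intro j hj
    rw [mem_Icc] at hj
    exact ENNReal.mul_ne_top (Z_ne_top (by omega)) (Z_ne_top (by omega))
  have hmain := congrArg ENNReal.toReal (main2 k h3)
  rw [ENNReal.toReal_add (ENNReal.mul_ne_top (by simp) (ZS_ne_top k h3))
      (ENNReal.sum_ne_top.mpr hZj),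
    ENNReal.toReal_mul, ENNReal.toReal_mul, ENNReal.toReal_sum hZj] at hmain
  rw [show ((k+1:ℕ) : ℝ≥0∞).toReal = (k:ℝ)+1 by
    rw [ENNReal.toReal_natCast]; push_cast; ring] at hmain
  simp only [ENNReal.toReal_mul, ENNReal.toReal_ofNat, ZS_toReal, Z_toReal] at hmain
  -- hmain : 2 * zetaStar (k-1) 1 + ∑ j ∈ Icc 2 (k-2), zeta j * zeta (k-j) = (k+1) * zeta k
  have hEO := Finset.sum_filter_add_sum_filter_not (Icc 2 (k-2)) (fun j => Even j)
    (fun j => zeta j * zeta (k-j))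
  have hswap : ∑ j ∈ (Icc 2 (k-2)).filter (fun j => ¬ Even j), zeta j * zeta (k-j)
      = ∑ j ∈ (Icc 2 (k-2)).filter (fun j => Even j), zeta j * zeta (k-j) := by
    apply Finset.sum_nbij' (fun j => k - j) (fun j => k - j)
    · intro a ha
      simp only [mem_filter, mem_Icc] at *
      refine ⟨⟨by omega, by omega⟩, ?_⟩
      exact Nat.Odd.sub_odd hk (Nat.not_even_iff_odd.mp ha.2)
    · intro a ha
      simp only [mem_filter, mem_Icc] at *
      refine ⟨⟨by omega, by omega⟩, ?_⟩
      exact Nat.not_even_iff_odd.mpr (Nat.Odd.sub_even (by omega) hk ha.2)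
    · intro a ha; simp only [mem_filter, mem_Icc] at ha; omega
    · intro a ha; simp only [mem_filter, mem_Icc] at ha; omega
    · intro a ha
      simp only [mem_filter, mem_Icc] at ha
      rw [show k - (k - a) = a by omega, mul_comm]
  rw [← hEO, hswap] at hmain
  push_cast at hmain
  linarith
end
end

section
/- ζ*(5,1) = ζ(2)ζ(4) − (1/2) ζ(3)², where ζ*(a,b) = Σ_{m ≥ n ≥ 1} m^{−a} n^{−b}. -/
open scoped BigOperators

noncomputable section

open Real

namespace ZetaAux

/-- The summand `1/((j+1)^t (j+k+2)^s)`, i.e. a double-zeta summand reindexed over a full grid. -/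
def g (t s : ℕ) (p : ℕ × ℕ) : ℝ :=
  1 / (((p.1 : ℝ) + 1) ^ t * ((p.1 : ℝ) + (p.2 : ℝ) + 2) ^ s)

/-- Same with the roles of the two grid coordinates swapped. -/
def gs (t s : ℕ) (p : ℕ × ℕ) : ℝ :=
  1 / (((p.2 : ℝ) + 1) ^ t * ((p.1 : ℝ) + (p.2 : ℝ) + 2) ^ s)

/-- `P t s = Σ_{j,k≥0} 1/((j+1)^t (j+k+2)^s)`, i.e. the double zeta value `ζ(s,t)`. -/
def P (t s : ℕ) : ℝ := ∑' q : ℕ × ℕ, g t s q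

lemma hasSum_sumType {α β : Type*} {f : α ⊕ β → ℝ} {a b : ℝ}
    (ha : HasSum (fun x => f (Sum.inl x)) a) (hb : HasSum (fun x => f (Sum.inr x)) b) :
    HasSum f (a + b) := by
  refine HasSum.add_isCompl Set.isCompl_range_inl_range_inr ?_ ?_
  · exact (Equiv.ofInjective Sum.inl Sum.inl_injective).hasSum_iff.1 ha
  · exact (Equiv.ofInjective Sum.inr Sum.inr_injective).hasSum_iff.1 hb

/-- Trisection of the grid `ℕ × ℕ` into (strictly) below-diagonal, above-diagonal and
diagonal parts. -/
def tri : (ℕ × ℕ) ⊕ ((ℕ × ℕ) ⊕ ℕ) ≃ ℕ × ℕ where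
  toFun x := match x with
    | .inl q => (q.1 + q.2 + 1, q.1)
    | .inr (.inl q) => (q.1, q.1 + q.2 + 1)
    | .inr (.inr n) => (n, n)
  invFun p :=
    if p.2 < p.1 then .inl (p.2, p.1 - p.2 - 1)
    else if p.1 < p.2 then .inr (.inl (p.1, p.2 - p.1 - 1))
    else .inr (.inr p.1)
  left_inv x := by
    rcases x with ⟨j, k⟩ | ⟨j, k⟩ | n <;> dsimp only
    · rw [if_pos (by omega)]
      have : j + k + 1 - j - 1 = k := by omega
      rw [this]
    · rw [if_neg (by omega), if_pos (by omega)]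
      have : j + k + 1 - j - 1 = k := by omega
      rw [this]
    · rw [if_neg (by omega), if_neg (by omega)]
  right_inv p := by
    obtain ⟨m, n⟩ := p
    dsimp only
    rcases Nat.lt_trichotomy n m with h | h | h
    · rw [if_pos h]
      show (n + (m - n - 1) + 1, n) = (m, n)
      have : n + (m - n - 1) + 1 = m := by omega
      rw [this]
    · subst h
      rw [if_neg (by omega), if_neg (by omega)]
    · rw [if_neg (by omega), if_pos h]
      show (m, m + (n - m - 1) + 1) = (m, n)
      have : m + (n - m - 1) + 1 = n := by omega
      rw [this]

lemma trisum {f : ℕ × ℕ → ℝ} {A B C : ℝ}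
    (hA : HasSum (fun q : ℕ × ℕ => f (q.1 + q.2 + 1, q.1)) A)
    (hB : HasSum (fun q : ℕ × ℕ => f (q.1, q.1 + q.2 + 1)) B)
    (hC : HasSum (fun n : ℕ => f (n, n)) C) : HasSum f (A + (B + C)) := by
  rw [← tri.hasSum_iff]
  exact hasSum_sumType hA (hasSum_sumType hB hC)

/-- Decomposition of `{(m,n) : n ≤ m}` into the strict part and the diagonal. -/
def e2 : (ℕ × ℕ) ⊕ ℕ ≃ {q : ℕ × ℕ // q.2 ≤ q.1} where
  toFun x := match x with
    | .inl q => ⟨(q.1 + q.2 + 1, q.1), by show q.1 ≤ q.1 + q.2 + 1; omega⟩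
    | .inr n => ⟨(n, n), le_refl n⟩
  invFun p := if p.1.2 < p.1.1 then .inl (p.1.2, p.1.1 - p.1.2 - 1) else .inr p.1.1
  left_inv x := by
    rcases x with ⟨j, k⟩ | n <;> dsimp only
    · rw [if_pos (by omega)]
      have : j + k + 1 - j - 1 = k := by omega
      rw [this]
    · rw [if_neg (by omega)]
  right_inv p := by
    obtain ⟨⟨m, n⟩, hmn⟩ := p
    dsimp only
    rcases Nat.lt_or_ge n m with h | h
    · rw [if_pos h]
      apply Subtype.ext
      show (n + (m - n - 1) + 1, n) = (m, n)
      have : n + (m - n - 1) + 1 = m := by omega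
      rw [this]
    · rw [if_neg (by omega)]
      have : n = m := by omega
      subst this
      apply Subtype.ext
      rfl

lemma zsum (s : ℕ) (hs : 2 ≤ s) : Summable (fun n : ℕ => 1 / ((n : ℝ) + 1) ^ s) := by
  have h : Summable (fun n : ℕ => 1 / (n : ℝ) ^ s) := by
    apply Real.summable_one_div_nat_pow.2
    omega
  have := (summable_nat_add_iff 1).2 h
  exact this.congr fun n => by push_cast; ring

lemma sumB : Summable (fun p : ℕ × ℕ => 1 / (((p.1 : ℝ) + 1) ^ 2 * ((p.2 : ℝ) + 1) ^ 2)) := by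
  have h : Summable (fun n : ℕ => ‖1 / ((n : ℝ) + 1) ^ 2‖) := by
    refine (zsum 2 le_rfl).congr fun n => ?_
    rw [Real.norm_eq_abs, abs_of_nonneg (by positivity)]
  exact (summable_mul_of_summable_norm h h).congr fun p => by
    rw [div_mul_div_comm, one_mul]

lemma key_ineq {x y : ℝ} (hx : 1 ≤ x) (hy : 1 ≤ y) {t s : ℕ} (ht : 1 ≤ t) (hs : 2 ≤ s)
    (h6 : t + s = 6) : x ^ 2 * y ^ 2 ≤ x ^ t * (x + y) ^ s := by
  have hxy1 : (1 : ℝ) ≤ x + y := by linarith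
  have h2 : y ^ 2 ≤ (x + y) ^ 2 := by nlinarith
  rcases le_or_gt 2 t with h | h
  · calc x ^ 2 * y ^ 2 ≤ x ^ t * (x + y) ^ 2 :=
          mul_le_mul (pow_le_pow_right₀ hx h) h2 (by positivity) (by positivity)
    _ ≤ x ^ t * (x + y) ^ s :=
          mul_le_mul_of_nonneg_left (pow_le_pow_right₀ hxy1 hs) (by positivity)
  · have ht1 : t = 1 := by omega
    have hs5 : s = 5 := by omega
    subst ht1 hs5
    have h3 : x * y ^ 2 ≤ (x + y) * (x + y) ^ 2 :=
      mul_le_mul (by linarith) h2 (by positivity) (by linarith)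
    calc x ^ 2 * y ^ 2 = x * (x * y ^ 2) := by ring
    _ ≤ x * ((x + y) * (x + y) ^ 2) := mul_le_mul_of_nonneg_left h3 (by linarith)
    _ = x ^ 1 * (x + y) ^ 3 := by ring
    _ ≤ x ^ 1 * (x + y) ^ 5 :=
          mul_le_mul_of_nonneg_left (pow_le_pow_right₀ hxy1 (by omega)) (by linarith)

lemma summable_g {t s : ℕ} (ht : 1 ≤ t) (hs : 2 ≤ s) (h6 : t + s = 6) : Summable (g t s) := by
  refine Summable.of_nonneg_of_le (fun p => by unfold g; positivity) (fun p => ?_) sumB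
  unfold g
  apply one_div_le_one_div_of_le (by positivity)
  have h1 : (1 : ℝ) ≤ (p.1 : ℝ) + 1 := by have := Nat.cast_nonneg (α := ℝ) p.1; linarith
  have h2 : (1 : ℝ) ≤ (p.2 : ℝ) + 1 := by have := Nat.cast_nonneg (α := ℝ) p.2; linarith
  have hk := key_ineq h1 h2 ht hs h6
  calc ((p.1 : ℝ) + 1) ^ 2 * ((p.2 : ℝ) + 1) ^ 2
      ≤ ((p.1 : ℝ) + 1) ^ t * (((p.1 : ℝ) + 1) + ((p.2 : ℝ) + 1)) ^ s := hk
    _ = ((p.1 : ℝ) + 1) ^ t * ((p.1 : ℝ) + (p.2 : ℝ) + 2) ^ s := by ring_nf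

lemma summable_gs {t s : ℕ} (ht : 1 ≤ t) (hs : 2 ≤ s) (h6 : t + s = 6) : Summable (gs t s) := by
  have h := (summable_g ht hs h6).comp_injective (Equiv.prodComm ℕ ℕ).injective
  refine h.congr fun q => ?_
  show g t s (q.2, q.1) = gs t s q
  unfold g gs
  rw [show ((q.2 : ℝ) + (q.1 : ℝ) + 2) = ((q.1 : ℝ) + (q.2 : ℝ) + 2) by ring]

lemma tsum_gs {t s : ℕ} : ∑' q : ℕ × ℕ, gs t s q = P t s := by
  rw [show P t s = ∑' q : ℕ × ℕ, g t s q from rfl,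
    ← (Equiv.prodComm ℕ ℕ).tsum_eq (g t s)]
  refine tsum_congr fun q => ?_
  show gs t s q = g t s (q.2, q.1)
  unfold g gs
  rw [show ((q.2 : ℝ) + (q.1 : ℝ) + 2) = ((q.1 : ℝ) + (q.2 : ℝ) + 2) by ring]

lemma prod_zeta (a b : ℕ) (ha : 2 ≤ a) (hb : 2 ≤ b) :
    zeta a * zeta b = ∑' p : ℕ × ℕ, 1 / (((p.1 : ℝ) + 1) ^ a * ((p.2 : ℝ) + 1) ^ b) := by
  have hna : Summable (fun n : ℕ => ‖1 / ((n : ℝ) + 1) ^ a‖) :=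
    (zsum a ha).congr fun n => by rw [Real.norm_eq_abs, abs_of_nonneg (by positivity)]
  have hnb : Summable (fun n : ℕ => ‖1 / ((n : ℝ) + 1) ^ b‖) :=
    (zsum b hb).congr fun n => by rw [Real.norm_eq_abs, abs_of_nonneg (by positivity)]
  rw [zeta, zeta, tsum_mul_tsum_of_summable_norm hna hnb]
  exact tsum_congr fun p => by rw [div_mul_div_comm, one_mul]


lemma hasSum_shift {s : ℕ} (hs : 1 ≤ s) {A : ℝ}
    (h : HasSum (fun n : ℕ => 1 / (n : ℝ) ^ s) A) :
    HasSum (fun n : ℕ => 1 / ((n : ℝ) + 1) ^ s) A := by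
  have h0 : (1 : ℝ) / ((0 : ℕ) : ℝ) ^ s = 0 := by
    rw [Nat.cast_zero, zero_pow (by omega), div_zero]
  have h2 := (hasSum_nat_add_iff' (f := fun n : ℕ => 1 / (n : ℝ) ^ s) 1).2 h
  simp only [Finset.range_one, Finset.sum_singleton, h0, sub_zero] at h2
  exact h2.congr_fun fun n => by push_cast; ring

lemma bern6 : (bernoulli 6 : ℚ) = 1 / 42 := by
  have h0 : bernoulli' 0 = 1 := bernoulli'_zero
  have h1 : bernoulli' 1 = 1 / 2 := bernoulli'_one
  have h2 : bernoulli' 2 = 1 / 6 := bernoulli'_two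
  have h3 : bernoulli' 3 = 0 := bernoulli'_three
  have h4 : bernoulli' 4 = -1 / 30 := bernoulli'_four
  have h5 : bernoulli' 5 = 0 := by
    rw [bernoulli'_def]
    simp [Finset.sum_range_succ, h0, h1, h2, h3, h4, Nat.choose]
    norm_num
  have h6 : bernoulli' 6 = 1 / 42 := by
    rw [bernoulli'_def]
    simp [Finset.sum_range_succ, h0, h1, h2, h3, h4, h5, Nat.choose]
    norm_num
  rw [bernoulli_eq_bernoulli'_of_ne_one (by norm_num), h6]

lemma zeta2 : zeta 2 = π ^ 2 / 6 := (hasSum_shift (by norm_num) hasSum_zeta_two).tsum_eq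
lemma zeta4 : zeta 4 = π ^ 4 / 90 := (hasSum_shift (by norm_num) hasSum_zeta_four).tsum_eq

lemma zeta6 : zeta 6 = π ^ 6 / 945 := by
  have h := hasSum_zeta_nat (k := 3) (by norm_num)
  norm_num [bern6, Nat.factorial] at h
  have h' : HasSum (fun n : ℕ => 1 / (n : ℝ) ^ 6) (π ^ 6 / 945) := by
    refine HasSum.congr_fun ?_ (fun n => by rw [one_div])
    convert h using 1
    ring
  exact (hasSum_shift (by norm_num) h').tsum_eq

lemma hasSum_zeta' (s : ℕ) (hs : 2 ≤ s) :
    HasSum (fun n : ℕ => 1 / ((n : ℝ) + 1) ^ s) (zeta s) := (zsum s hs).hasSum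

lemma stuffle24 : zeta 2 * zeta 4 = P 4 2 + (P 2 4 + zeta 6) := by
  rw [prod_zeta 2 4 (by norm_num) (by norm_num)]
  refine HasSum.tsum_eq (trisum ?_ ?_ ?_)
  · refine ((summable_g (t := 4) (s := 2) (by norm_num) (by norm_num) rfl).hasSum).congr_fun
      fun q => ?_
    show _ = g 4 2 q
    unfold g
    push_cast
    ring
  · refine ((summable_g (t := 2) (s := 4) (by norm_num) (by norm_num) rfl).hasSum).congr_fun
      fun q => ?_
    show _ = g 2 4 q
    unfold g
    push_cast
    ring
  · refine (hasSum_zeta' 6 (by norm_num)).congr_fun fun n => ?_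
    push_cast
    ring

lemma stuffle33 : zeta 3 * zeta 3 = P 3 3 + (P 3 3 + zeta 6) := by
  rw [prod_zeta 3 3 (by norm_num) (by norm_num)]
  refine HasSum.tsum_eq (trisum ?_ ?_ ?_)
  · refine ((summable_g (t := 3) (s := 3) (by norm_num) (by norm_num) rfl).hasSum).congr_fun
      fun q => ?_
    show _ = g 3 3 q
    unfold g
    push_cast
    ring
  · refine ((summable_g (t := 3) (s := 3) (by norm_num) (by norm_num) rfl).hasSum).congr_fun
      fun q => ?_
    show _ = g 3 3 q
    unfold g
    push_cast
    ring
  · refine (hasSum_zeta' 6 (by norm_num)).congr_fun fun n => ?_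
    push_cast
    ring

lemma zetaStar_split : zetaStar 5 1 = P 1 5 + zeta 6 := by
  rw [zetaStar]
  refine HasSum.tsum_eq ?_
  rw [← e2.hasSum_iff]
  refine hasSum_sumType ?_ ?_
  · refine ((summable_g (t := 1) (s := 5) (by norm_num) (by norm_num) rfl).hasSum).congr_fun
      fun q => ?_
    simp only [Function.comp_apply, e2, Equiv.coe_fn_mk]
    show _ = g 1 5 q
    unfold g
    push_cast
    ring
  · refine (hasSum_zeta' 6 (by norm_num)).congr_fun fun n => ?_
    simp only [Function.comp_apply, e2, Equiv.coe_fn_mk]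
    ring


lemma pf24 {x y : ℝ} (hx : x ≠ 0) (hy : y ≠ 0) (hxy : x + y ≠ 0) :
    1 / (x ^ 2 * y ^ 4) =
      1 / (x ^ 2 * (x + y) ^ 4) + (4 * (1 / (x ^ 1 * (x + y) ^ 5)) +
        (1 / (y ^ 4 * (x + y) ^ 2) + (2 * (1 / (y ^ 3 * (x + y) ^ 3)) +
          (3 * (1 / (y ^ 2 * (x + y) ^ 4)) + 4 * (1 / (y ^ 1 * (x + y) ^ 5)))))) := by
  field_simp
  ring

lemma pf33 {x y : ℝ} (hx : x ≠ 0) (hy : y ≠ 0) (hxy : x + y ≠ 0) :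
    1 / (x ^ 3 * y ^ 3) =
      1 / (x ^ 3 * (x + y) ^ 3) + (3 * (1 / (x ^ 2 * (x + y) ^ 4)) +
        (6 * (1 / (x ^ 1 * (x + y) ^ 5)) + (1 / (y ^ 3 * (x + y) ^ 3) +
          (3 * (1 / (y ^ 2 * (x + y) ^ 4)) + 6 * (1 / (y ^ 1 * (x + y) ^ 5)))))) := by
  field_simp
  ring

lemma euler24 : zeta 2 * zeta 4 =
    P 2 4 + (4 * P 1 5 + (P 4 2 + (2 * P 3 3 + (3 * P 2 4 + 4 * P 1 5)))) := by
  have s24 := summable_g (t := 2) (s := 4) (by norm_num) (by norm_num) rfl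
  have s15 := summable_g (t := 1) (s := 5) (by norm_num) (by norm_num) rfl
  have t42 := summable_gs (t := 4) (s := 2) (by norm_num) (by norm_num) rfl
  have t33 := summable_gs (t := 3) (s := 3) (by norm_num) (by norm_num) rfl
  have t24 := summable_gs (t := 2) (s := 4) (by norm_num) (by norm_num) rfl
  have t15 := summable_gs (t := 1) (s := 5) (by norm_num) (by norm_num) rfl
  have hpt : ∀ p : ℕ × ℕ, 1 / (((p.1 : ℝ) + 1) ^ 2 * ((p.2 : ℝ) + 1) ^ 4) =
      g 2 4 p + (4 * g 1 5 p + (gs 4 2 p + (2 * gs 3 3 p + (3 * gs 2 4 p + 4 * gs 1 5 p)))) := by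
    intro p
    have e : ((p.1 : ℝ) + (p.2 : ℝ) + 2) = ((p.1 : ℝ) + 1) + ((p.2 : ℝ) + 1) := by ring
    unfold g gs
    rw [e]
    exact pf24 (by positivity) (by positivity) (by positivity)
  rw [prod_zeta 2 4 (by norm_num) (by norm_num), tsum_congr hpt,
    Summable.tsum_add s24 ((s15.mul_left 4).add (t42.add ((t33.mul_left 2).add
      ((t24.mul_left 3).add (t15.mul_left 4))))),
    Summable.tsum_add (s15.mul_left 4) (t42.add ((t33.mul_left 2).add
      ((t24.mul_left 3).add (t15.mul_left 4)))),
    Summable.tsum_add t42 ((t33.mul_left 2).add ((t24.mul_left 3).add (t15.mul_left 4))),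
    Summable.tsum_add (t33.mul_left 2) ((t24.mul_left 3).add (t15.mul_left 4)),
    Summable.tsum_add (t24.mul_left 3) (t15.mul_left 4),
    tsum_mul_left, tsum_mul_left, tsum_mul_left, tsum_mul_left,
    tsum_gs, tsum_gs, tsum_gs, tsum_gs]
  rfl

lemma euler33 : zeta 3 * zeta 3 =
    P 3 3 + (3 * P 2 4 + (6 * P 1 5 + (P 3 3 + (3 * P 2 4 + 6 * P 1 5)))) := by
  have s33 := summable_g (t := 3) (s := 3) (by norm_num) (by norm_num) rfl
  have s24 := summable_g (t := 2) (s := 4) (by norm_num) (by norm_num) rfl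
  have s15 := summable_g (t := 1) (s := 5) (by norm_num) (by norm_num) rfl
  have t33 := summable_gs (t := 3) (s := 3) (by norm_num) (by norm_num) rfl
  have t24 := summable_gs (t := 2) (s := 4) (by norm_num) (by norm_num) rfl
  have t15 := summable_gs (t := 1) (s := 5) (by norm_num) (by norm_num) rfl
  have hpt : ∀ p : ℕ × ℕ, 1 / (((p.1 : ℝ) + 1) ^ 3 * ((p.2 : ℝ) + 1) ^ 3) =
      g 3 3 p + (3 * g 2 4 p + (6 * g 1 5 p + (gs 3 3 p + (3 * gs 2 4 p + 6 * gs 1 5 p)))) := by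
    intro p
    have e : ((p.1 : ℝ) + (p.2 : ℝ) + 2) = ((p.1 : ℝ) + 1) + ((p.2 : ℝ) + 1) := by ring
    unfold g gs
    rw [e]
    exact pf33 (by positivity) (by positivity) (by positivity)
  rw [prod_zeta 3 3 (by norm_num) (by norm_num), tsum_congr hpt,
    Summable.tsum_add s33 ((s24.mul_left 3).add ((s15.mul_left 6).add (t33.add
      ((t24.mul_left 3).add (t15.mul_left 6))))),
    Summable.tsum_add (s24.mul_left 3) ((s15.mul_left 6).add (t33.add
      ((t24.mul_left 3).add (t15.mul_left 6)))),
    Summable.tsum_add (s15.mul_left 6) (t33.add ((t24.mul_left 3).add (t15.mul_left 6))),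
    Summable.tsum_add t33 ((t24.mul_left 3).add (t15.mul_left 6)),
    Summable.tsum_add (t24.mul_left 3) (t15.mul_left 6),
    tsum_mul_left, tsum_mul_left, tsum_mul_left, tsum_mul_left,
    tsum_gs, tsum_gs, tsum_gs]
  rfl

end ZetaAux

/-- `ζ*(5,1) = ζ(2)ζ(4) − (1/2)ζ(3)²`. -/
theorem zetaStar_five_one : zetaStar 5 1 = zeta 2 * zeta 4 - 1 / 2 * zeta 3 ^ 2 := by
  have h1 := ZetaAux.zetaStar_split
  have h2 := ZetaAux.stuffle24
  have h3 := ZetaAux.stuffle33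
  have h4 := ZetaAux.euler24
  have h5 := ZetaAux.euler33
  have h6 : zeta 2 * zeta 4 = 7 / 4 * zeta 6 := by
    rw [ZetaAux.zeta2, ZetaAux.zeta4, ZetaAux.zeta6]
    ring
  have h7 : zeta 3 ^ 2 = zeta 3 * zeta 3 := by ring
  rw [h1, h7]
  linarith

end
end

section
/- ζ*(9,1) = ζ(2)ζ(8) − ζ(3)ζ(7) + ζ(4)ζ(6) − (1/2) ζ(5)², where ζ*(a,b) = Σ_{m ≥ n ≥ 1} m^{−a} n^{−b}. -/
open scoped BigOperators
open Finset Filter Real Topology Nat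

noncomputable section

/-! ### Bernoulli numbers -/

private theorem b5' : bernoulli' 5 = 0 := by
  rw [bernoulli'_def]; norm_num [Finset.sum_range_succ, Nat.choose]
private theorem b6' : bernoulli' 6 = 1/42 := by
  rw [bernoulli'_def]; norm_num [Finset.sum_range_succ, Nat.choose, b5']
private theorem b7' : bernoulli' 7 = 0 := by
  rw [bernoulli'_def]; norm_num [Finset.sum_range_succ, Nat.choose, b5', b6']
private theorem b8' : bernoulli' 8 = -1/30 := by
  rw [bernoulli'_def]; norm_num [Finset.sum_range_succ, Nat.choose, b5', b6', b7']
private theorem b9' : bernoulli' 9 = 0 := by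
  rw [bernoulli'_def]; norm_num [Finset.sum_range_succ, Nat.choose, b5', b6', b7', b8']
private theorem b10' : bernoulli' 10 = 5/66 := by
  rw [bernoulli'_def]; norm_num [Finset.sum_range_succ, Nat.choose, b5', b6', b7', b8', b9']

/-! ### Even zeta values -/

private theorem zeta_even {k : ℕ} (hk : k ≠ 0) :
    zeta (2*k) = (-1 : ℝ) ^ (k + 1) * (2 : ℝ) ^ (2 * k - 1) * π ^ (2 * k) *
        (bernoulli (2 * k) : ℝ) / (2 * k)! := by
  set L : ℝ := (-1 : ℝ) ^ (k + 1) * (2 : ℝ) ^ (2 * k - 1) * π ^ (2 * k) *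
        (bernoulli (2 * k) : ℝ) / (2 * k)! with hL
  have h := hasSum_zeta_nat (k := k) hk
  have h2 : HasSum (fun n : ℕ => 1 / ((n : ℝ) + 1) ^ (2*k)) L := by
    have h3 : HasSum (fun n : ℕ => 1 / ((n + 1 : ℕ) : ℝ) ^ (2*k)) L := by
      refine (hasSum_nat_add_iff (f := fun n : ℕ => 1 / (n : ℝ) ^ (2*k)) 1).mpr ?_
      simpa [Finset.sum_range_one, zero_pow (by omega : 2*k ≠ 0)] using h
    have e : (fun n : ℕ => 1 / ((n : ℝ) + 1) ^ (2*k)) = fun n : ℕ => 1 / ((n + 1 : ℕ) : ℝ) ^ (2*k) := by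
      funext n; push_cast; ring
    rw [e]; exact h3
  exact h2.tsum_eq

private theorem zeta2 : zeta 2 = π^2/6 := by
  have h := zeta_even (k := 1) one_ne_zero
  norm_num [bernoulli_eq_bernoulli'_of_ne_one, Nat.factorial] at h
  rw [h]; ring
private theorem zeta4 : zeta 4 = π^4/90 := by
  have h := zeta_even (k := 2) two_ne_zero
  norm_num [bernoulli_eq_bernoulli'_of_ne_one, Nat.factorial] at h
  rw [h]; ring
private theorem zeta6 : zeta 6 = π^6/945 := by
  have h := zeta_even (k := 3) three_ne_zero
  norm_num [bernoulli_eq_bernoulli'_of_ne_one, Nat.factorial, b6'] at h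
  rw [h]; ring
private theorem zeta8 : zeta 8 = π^8/9450 := by
  have h := zeta_even (k := 4) four_ne_zero
  norm_num [bernoulli_eq_bernoulli'_of_ne_one, Nat.factorial, b8'] at h
  rw [h]; ring
private theorem zeta10 : zeta 10 = π^10/93555 := by
  have h := zeta_even (k := 5) (by norm_num)
  norm_num [bernoulli_eq_bernoulli'_of_ne_one, Nat.factorial, b10'] at h
  rw [h]; ring

/-! ### Summability basics -/

private lemma sumz {s : ℕ} (hs : 2 ≤ s) : Summable (fun n : ℕ => 1/((n:ℝ)+1)^s) := by
  have h : Summable (fun n : ℕ => 1/(n:ℝ)^s) := Real.summable_one_div_nat_pow.mpr (by omega)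
  have h2 := (summable_nat_add_iff (f := fun n : ℕ => 1/(n:ℝ)^s) 1).mpr h
  exact h2.congr fun n => by push_cast; ring

private def t (a b : ℕ) (p : ℕ × ℕ) : ℝ := 1/(((p.1:ℝ)+1)^a * ((p.2:ℝ)+1)^b)

private lemma gridSummable {a b : ℕ} (ha : 2 ≤ a) (hb : 2 ≤ b) : Summable (t a b) := by
  have h := Summable.mul_of_nonneg (sumz ha) (sumz hb)
    (fun n => by positivity) (fun n => by positivity)
  exact h.congr fun p => by rw [t, one_div_mul_one_div]

private lemma zmul {a b : ℕ} (ha : 2 ≤ a) (hb : 2 ≤ b) :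
    ∑' p : ℕ × ℕ, t a b p = zeta a * zeta b := by
  rw [Summable.tsum_prod' (gridSummable ha hb) (fun m => (gridSummable ha hb).prod_factor m)]
  have hin : ∀ m : ℕ, ∑' n : ℕ, t a b (m, n) = (1/((m:ℝ)+1)^a) * zeta b := by
    intro m
    rw [zeta, ← tsum_mul_left]
    exact tsum_congr fun n => by rw [t, one_div_mul_one_div]
  calc ∑' (m : ℕ) (n : ℕ), t a b (m, n) = ∑' m : ℕ, (1/((m:ℝ)+1)^a) * zeta b :=
        tsum_congr hin
    _ = (∑' m : ℕ, 1/((m:ℝ)+1)^a) * zeta b := tsum_mul_right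
    _ = zeta a * zeta b := rfl

/-! ### Equivs -/

private def eLT : ℕ × ℕ ≃ {q : ℕ × ℕ // q.2 < q.1} where
  toFun p := ⟨(p.1 + p.2 + 1, p.1), by omega⟩
  invFun q := (q.1.2, q.1.1 - q.1.2 - 1)
  left_inv p := by
    simp only [Prod.ext_iff]
    constructor
    · trivial
    · omega
  right_inv q := by
    rcases q with ⟨⟨m, n⟩, h⟩
    have h' : n < m := h
    apply Subtype.ext
    simp only [Prod.ext_iff]
    constructor
    · show n + (m - n - 1) + 1 = m
      omega
    · trivial

private def eDiag : ℕ ≃ {q : ℕ × ℕ // q.1 = q.2} where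
  toFun n := ⟨(n, n), rfl⟩
  invFun q := q.1.1
  left_inv n := rfl
  right_inv q := by
    rcases q with ⟨⟨m, n⟩, h⟩
    have h' : m = n := h
    subst h'
    rfl

private def eSwap : {q : ℕ × ℕ // q.2 < q.1} ≃ {q : ℕ × ℕ // q.1 < q.2} where
  toFun q := ⟨(q.1.2, q.1.1), q.2⟩
  invFun q := ⟨(q.1.2, q.1.1), q.2⟩
  left_inv q := rfl
  right_inv q := rfl

private def eSig : (Σ m : ℕ, Fin m) ≃ {q : ℕ × ℕ // q.2 < q.1} where
  toFun x := ⟨(x.1, x.2), x.2.isLt⟩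
  invFun q := ⟨q.1.1, ⟨q.1.2, q.2⟩⟩
  left_inv x := rfl
  right_inv q := rfl

private lemma hasSum_tele (c : ℕ) :
    HasSum (fun k : ℕ => 1/((k:ℝ)+1) - 1/((k:ℝ)+1+c)) (∑ i ∈ range c, 1/((i:ℝ)+1)) := by
  set f : ℕ → ℝ := fun k => 1/((k:ℝ)+1) with hf
  have hpos : ∀ k : ℕ, (0:ℝ) < (k:ℝ)+1 := fun k => by positivity
  have hbd : ∀ k : ℕ, f k - 1/((k:ℝ)+1+c) ≤ (c:ℝ) * (1/((k:ℝ)+1)^2) := by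
    intro k
    have h1 : (0:ℝ) < (k:ℝ)+1 := hpos k
    have h2 : (0:ℝ) < (k:ℝ)+1+c := by positivity
    rw [hf]
    rw [div_sub_div _ _ (ne_of_gt h1) (ne_of_gt h2)]
    rw [div_le_iff₀ (by positivity)]
    have : (1:ℝ) * ((k:ℝ)+1+c) - ((k:ℝ)+1) * 1 = c := by ring
    rw [this]
    have h3 : ((1:ℝ)/((k:ℝ)+1)^2)*(((k:ℝ)+1)*((k:ℝ)+1+c)) = ((k:ℝ)+1+c)/((k:ℝ)+1) := by
      field_simp
    have h4 : (1:ℝ) ≤ ((k:ℝ)+1+c)/((k:ℝ)+1) := by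
      rw [le_div_iff₀ h1]; simp [Nat.cast_nonneg]
    calc (c:ℝ) = c * 1 := by ring
    _ ≤ c * (((k:ℝ)+1+c)/((k:ℝ)+1)) := by
        exact mul_le_mul_of_nonneg_left h4 (Nat.cast_nonneg c)
    _ = c * (1/((k:ℝ)+1)^2) * (((k:ℝ)+1)*((k:ℝ)+1+c)) := by rw [mul_assoc, h3]
  have hnn : ∀ k : ℕ, 0 ≤ f k - 1/((k:ℝ)+1+c) := by
    intro k
    have h2 : (0:ℝ) < (k:ℝ)+1+c := by positivity
    have : 1/((k:ℝ)+1+c) ≤ f k := by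
      rw [hf]; apply one_div_le_one_div_of_le (hpos k); simp [Nat.cast_nonneg]
    linarith
  have hsum : Summable (fun k : ℕ => f k - 1/((k:ℝ)+1+c)) :=
    Summable.of_nonneg_of_le hnn hbd ((sumz (le_refl 2)).mul_left _)
  -- partial sums
  have key : ∀ m : ℕ, ∑ k ∈ range m, (f k - 1/((k:ℝ)+1+c)) =
      ∑ i ∈ range c, f i - ∑ i ∈ range c, f (m+i) := by
    intro m
    have e0 : ∀ k : ℕ, 1/((k:ℝ)+1+c) = f (k+c) := by
      intro k; rw [hf]; push_cast; ring_nf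
    simp_rw [e0]
    rw [Finset.sum_sub_distrib]
    have e1 : ∑ k ∈ range (m+c), f k = ∑ k ∈ range m, f k + ∑ i ∈ range c, f (m+i) :=
      Finset.sum_range_add f m c
    have e2 : ∑ k ∈ range (c+m), f k = ∑ k ∈ range c, f k + ∑ i ∈ range m, f (c+i) :=
      Finset.sum_range_add f c m
    have e3 : ∑ k ∈ range m, f (k+c) = ∑ i ∈ range m, f (c+i) := by
      apply Finset.sum_congr rfl; intro i _; rw [add_comm]
    rw [e3]
    have : ∑ i ∈ range m, f (c+i) = ∑ k ∈ range (m+c), f k - ∑ k ∈ range c, f k := by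
      rw [add_comm m c, e2]; ring
    rw [this, e1]; ring
  have htail : Tendsto (fun m : ℕ => ∑ i ∈ range c, f (m+i)) atTop (𝓝 0) := by
    have : Tendsto (fun m : ℕ => ∑ i ∈ range c, f (m+i)) atTop (𝓝 (∑ i ∈ range c, (0:ℝ))) := by
      apply tendsto_finset_sum
      intro i _
      apply squeeze_zero (fun m => by positivity) (g := fun m : ℕ => 1/((m:ℝ)+1))
      · intro m
        rw [hf]
        apply one_div_le_one_div_of_le (hpos m)
        push_cast; linarith [Nat.cast_nonneg (α := ℝ) i]
      · exact tendsto_one_div_add_atTop_nhds_zero_nat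
    simpa using this
  have hlim : Tendsto (fun m : ℕ => ∑ k ∈ range m, (f k - 1/((k:ℝ)+1+c))) atTop
      (𝓝 (∑ i ∈ range c, f i)) := by
    simp_rw [key]
    simpa using tendsto_const_nhds.sub htail
  have := hsum.hasSum.tendsto_sum_nat
  have heq : (∑' k, (f k - 1/((k:ℝ)+1+c))) = ∑ i ∈ range c, f i :=
    tendsto_nhds_unique this hlim
  exact heq ▸ hsum.hasSum


/-! ### Comparison lemmas -/

private lemma onele (n : ℕ) : (1:ℝ) ≤ (n:ℝ)+1 := by
  have := Nat.cast_nonneg (α := ℝ) n; linarith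

private lemma le_t22 {f : ℕ × ℕ → ℝ} (h0 : ∀ p, 0 ≤ f p)
    (hle : ∀ p, f p ≤ t 2 2 p) : Summable f :=
  Summable.of_nonneg_of_le h0 hle (gridSummable le_rfl le_rfl)

private lemma t22_ge (p : ℕ × ℕ) {A : ℝ}
    (h : ((p.1:ℝ)+1)^2 * ((p.2:ℝ)+1)^2 ≤ A) (hA : (0:ℝ) < ((p.1:ℝ)+1)^2 * ((p.2:ℝ)+1)^2) :
    1/A ≤ t 2 2 p := by
  rw [t]
  exact one_div_le_one_div_of_le hA h


private lemma bnd1 (a b : ℝ) (ha : 1 ≤ a) (hb : 1 ≤ b) : a^2*b^2 ≤ b*(a+b)*a^8 := by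
  have e1 : a^2 ≤ a^8 := pow_le_pow_right₀ ha (by norm_num)
  have hbM : b ≤ a+b := by linarith
  calc a^2*b^2 = (a^2)*(b*b) := by ring
  _ ≤ (a^8)*(b*(a+b)) := by
      apply mul_le_mul e1 ?_ (by positivity) (by positivity)
      exact mul_le_mul_of_nonneg_left hbM (by positivity)
  _ = b*(a+b)*a^8 := by ring

private lemma bnd2 (a b : ℝ) (ha : 1 ≤ a) (hb : 1 ≤ b) : a^2*b^2 ≤ b*(a+b)^8*a := by
  have e0 : a*b ≤ (a+b)^2 := by nlinarith
  have e1 : (a+b)^2 ≤ (a+b)^8 := pow_le_pow_right₀ (by linarith) (by norm_num)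
  calc a^2*b^2 = (a*b)*(a*b) := by ring
  _ ≤ (a*b)*(a+b)^8 := by
      apply mul_le_mul_of_nonneg_left (le_trans e0 e1) (by positivity)
  _ = b*(a+b)^8*a := by ring

private lemma bnd3 (a b : ℝ) (ha : 1 ≤ a) (hb : 1 ≤ b) : a^2*b^2 ≤ (a+b)^9*a := by
  have e0 : a*b ≤ (a+b)^2 := by nlinarith
  have e2 : a^2*b^2 ≤ (a+b)^4 := by
    calc a^2*b^2 = (a*b)^2 := by ring
    _ ≤ ((a+b)^2)^2 := pow_le_pow_left₀ (by positivity) e0 2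
    _ = (a+b)^4 := by ring
  have e1 : (a+b)^4 ≤ (a+b)^9 := pow_le_pow_right₀ (by linarith) (by norm_num)
  calc a^2*b^2 ≤ (a+b)^9 := le_trans e2 e1
  _ = (a+b)^9*1 := by ring
  _ ≤ (a+b)^9*a := by
      apply mul_le_mul_of_nonneg_left ha (by positivity)

private lemma bnd4 (a b : ℝ) (ha : 1 ≤ a) (hb : 1 ≤ b) : a^2*b^2 ≤ (a+b)^9*b := by
  have h := bnd3 b a hb ha
  calc a^2*b^2 = b^2*a^2 := by ring
  _ ≤ (b+a)^9*b := h
  _ = (a+b)^9*b := by ring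

/-! ### The functions -/

private def h1 (p : ℕ × ℕ) : ℝ :=
  1/(((p.2:ℝ)+1) * ((p.1:ℝ)+(p.2:ℝ)+2) * ((p.1:ℝ)+1)^8)

private def h2 (p : ℕ × ℕ) : ℝ :=
  1/(((p.2:ℝ)+1) * ((p.1:ℝ)+(p.2:ℝ)+2)^8 * ((p.1:ℝ)+1))

private lemma h1_summable : Summable h1 := by
  refine le_t22 (fun p => by rw [h1]; positivity) (fun p => ?_)
  have ha := onele p.1
  have hb := onele p.2
  refine t22_ge p ?_ (by positivity)
  have h := bnd1 ((p.1:ℝ)+1) ((p.2:ℝ)+1) ha hb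
  calc ((p.1:ℝ)+1)^2 * ((p.2:ℝ)+1)^2 ≤ ((p.2:ℝ)+1)*(((p.1:ℝ)+1)+((p.2:ℝ)+1))*((p.1:ℝ)+1)^8 := h
  _ = ((p.2:ℝ)+1)*((p.1:ℝ)+(p.2:ℝ)+2)*((p.1:ℝ)+1)^8 := by ring

private lemma h2_summable : Summable h2 := by
  refine le_t22 (fun p => by rw [h2]; positivity) (fun p => ?_)
  have ha := onele p.1
  have hb := onele p.2
  refine t22_ge p ?_ (by positivity)
  have h := bnd2 ((p.1:ℝ)+1) ((p.2:ℝ)+1) ha hb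
  calc ((p.1:ℝ)+1)^2 * ((p.2:ℝ)+1)^2 ≤ ((p.2:ℝ)+1)*(((p.1:ℝ)+1)+((p.2:ℝ)+1))^8*((p.1:ℝ)+1) := h
  _ = ((p.2:ℝ)+1)*((p.1:ℝ)+(p.2:ℝ)+2)^8*((p.1:ℝ)+1) := by ring

private def q1 (p : ℕ × ℕ) : ℝ := 1/(((p.1:ℝ)+(p.2:ℝ)+2)^9 * ((p.1:ℝ)+1))

private def q2 (p : ℕ × ℕ) : ℝ := 1/(((p.1:ℝ)+(p.2:ℝ)+2)^9 * ((p.2:ℝ)+1))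

private lemma q1_summable : Summable q1 := by
  refine le_t22 (fun p => by rw [q1]; positivity) (fun p => ?_)
  have ha := onele p.1
  have hb := onele p.2
  refine t22_ge p ?_ (by positivity)
  have h := bnd3 ((p.1:ℝ)+1) ((p.2:ℝ)+1) ha hb
  calc ((p.1:ℝ)+1)^2 * ((p.2:ℝ)+1)^2 ≤ (((p.1:ℝ)+1)+((p.2:ℝ)+1))^9*((p.1:ℝ)+1) := h
  _ = ((p.1:ℝ)+(p.2:ℝ)+2)^9*((p.1:ℝ)+1) := by ring
  
private lemma q2_summable : Summable q2 := by
  refine le_t22 (fun p => by rw [q2]; positivity) (fun p => ?_)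
  have ha := onele p.1
  have hb := onele p.2
  refine t22_ge p ?_ (by positivity)
  have h := bnd4 ((p.1:ℝ)+1) ((p.2:ℝ)+1) ha hb
  calc ((p.1:ℝ)+1)^2 * ((p.2:ℝ)+1)^2 ≤ (((p.1:ℝ)+1)+((p.2:ℝ)+1))^9*((p.2:ℝ)+1) := h
  _ = ((p.1:ℝ)+(p.2:ℝ)+2)^9*((p.2:ℝ)+1) := by ring

/-! ### dzeta reparametrizations -/

private def gz (p : ℕ × ℕ) : ℝ := 1/(((p.1:ℝ)+1)^9 * ((p.2:ℝ)+1)^1)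

private lemma bnd5 (a b : ℝ) (ha : 1 ≤ a) (hb : 1 ≤ b) (hba : b ≤ a) :
    a^2*b^2 ≤ a^9*b^1 := by
  have e1 : a^3 ≤ a^9 := pow_le_pow_right₀ ha (by norm_num)
  calc a^2*b^2 = (a^2)*(b*b) := by ring
  _ ≤ (a^2)*(b*a) := by
      apply mul_le_mul_of_nonneg_left (mul_le_mul_of_nonneg_left hba (by positivity)) (by positivity)
  _ = (a^3)*b := by ring
  _ ≤ (a^9)*b := mul_le_mul_of_nonneg_right e1 (by positivity)
  _ = a^9*b^1 := by ring

private lemma gz_le_summable : Summable (fun q : {q : ℕ × ℕ // q.2 ≤ q.1} => gz q.1) := by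
  have hs := (gridSummable (le_refl 2) (le_refl 2)).subtype {q : ℕ × ℕ | q.2 ≤ q.1}
  refine Summable.of_nonneg_of_le (fun q => by rw [gz]; positivity) (fun q => ?_) hs
  show gz q.1 ≤ t 2 2 q.1
  rw [gz, t]
  apply one_div_le_one_div_of_le (by positivity)
  have hq : q.1.2 ≤ q.1.1 := q.2
  exact bnd5 _ _ (onele q.1.1) (onele q.1.2) (by exact_mod_cast by push_cast; linarith [Nat.cast_le (α := ℝ) |>.mpr hq])

private lemma gz_lt_summable : Summable (fun q : {q : ℕ × ℕ // q.2 < q.1} => gz q.1) := by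
  have hs := (gridSummable (le_refl 2) (le_refl 2)).subtype {q : ℕ × ℕ | q.2 < q.1}
  refine Summable.of_nonneg_of_le (fun q => by rw [gz]; positivity) (fun q => ?_) hs
  show gz q.1 ≤ t 2 2 q.1
  rw [gz, t]
  apply one_div_le_one_div_of_le (by positivity)
  have hq : q.1.2 ≤ q.1.1 := le_of_lt q.2
  exact bnd5 _ _ (onele q.1.1) (onele q.1.2) (by exact_mod_cast by push_cast; linarith [Nat.cast_le (α := ℝ) |>.mpr hq])

private lemma dzeta_eq_gz : dzeta 9 1 = ∑' q : {q : ℕ × ℕ // q.2 < q.1}, gz q.1 := rfl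

private lemma dz_q1 : dzeta 9 1 = ∑' p : ℕ × ℕ, q1 p := by
  rw [dzeta_eq_gz, ← eLT.tsum_eq (fun q : {q : ℕ × ℕ // q.2 < q.1} => gz q.1)]
  refine tsum_congr fun p => ?_
  show gz (p.1 + p.2 + 1, p.1) = q1 p
  rw [gz, q1]
  push_cast
  ring_nf

private lemma dz_q2 : dzeta 9 1 = ∑' p : ℕ × ℕ, q2 p := by
  rw [dz_q1, ← (Equiv.prodComm ℕ ℕ).tsum_eq q1]
  refine tsum_congr fun p => ?_
  show q1 (p.2, p.1) = q2 p
  rw [q1, q2]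
  ring_nf

private lemma dz_sigma :
    dzeta 9 1 = ∑' m : ℕ, (∑ i ∈ range m, 1/((i:ℝ)+1)) / ((m:ℝ)+1)^9 := by
  rw [dzeta_eq_gz, ← eSig.tsum_eq (fun q : {q : ℕ × ℕ // q.2 < q.1} => gz q.1)]
  have hsig : Summable (fun x : Σ m : ℕ, Fin m => gz ((eSig x).1)) :=
    eSig.summable_iff.mpr gz_lt_summable
  rw [Summable.tsum_sigma' (fun b => Summable.of_finite) hsig]
  refine tsum_congr fun m => ?_
  rw [tsum_fintype]
  have e1 : ∀ i : Fin m, gz ((eSig ⟨m, i⟩).1) = (1/(((i:ℕ):ℝ)+1)) / ((m:ℝ)+1)^9 := by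
    intro i
    show gz (m, (i:ℕ)) = _
    rw [gz]
    have hm : ((m:ℝ)+1) ≠ 0 := by positivity
    have hi : (((i:ℕ):ℝ)+1) ≠ 0 := by positivity
    field_simp
  rw [Finset.sum_congr rfl (fun i _ => e1 i)]
  rw [Fin.sum_univ_eq_sum_range (fun i => (1/(((i:ℕ):ℝ)+1)) / ((m:ℝ)+1)^9)]
  rw [← Finset.sum_div]

private lemma HH_summable :
    Summable (fun m : ℕ => (∑ i ∈ range m, 1/((i:ℝ)+1)) / ((m:ℝ)+1)^9) := by
  refine Summable.of_nonneg_of_le (fun m => by positivity) (fun m => ?_)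
    ((sumz (s := 8) (by norm_num)))
  have hH : (∑ i ∈ range m, 1/((i:ℝ)+1)) ≤ m := by
    calc (∑ i ∈ range m, 1/((i:ℝ)+1)) ≤ ∑ i ∈ range m, (1:ℝ) := by
          apply Finset.sum_le_sum
          intro i _
          rw [div_le_one (by positivity)]
          exact onele i
    _ = m := by simp
  rw [div_le_iff₀ (by positivity)]
  calc (∑ i ∈ range m, 1/((i:ℝ)+1)) ≤ m := hH
  _ ≤ ((m:ℝ)+1) := by linarith
  _ = 1/((m:ℝ)+1)^8 * ((m:ℝ)+1)^9 := by
      rw [one_div]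
      field_simp

/-! ### Evaluation of the two auxiliary double sums -/

private lemma h1_eval : ∑' p : ℕ × ℕ, h1 p = dzeta 9 1 + zeta 10 := by
  have hin : ∀ n : ℕ, HasSum (fun k : ℕ => h1 (n, k))
      ((∑ i ∈ range (n+1), 1/((i:ℝ)+1)) / ((n:ℝ)+1)^9) := by
    intro n
    have h := (hasSum_tele (n+1)).mul_left (1/((n:ℝ)+1)^9)
    have e : (fun k : ℕ => (1/((n:ℝ)+1)^9) * (1/((k:ℝ)+1) - 1/((k:ℝ)+1+((n+1:ℕ):ℝ))))
        = fun k : ℕ => h1 (n, k) := by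
      funext k
      rw [h1]
      push_cast
      have hk : ((k:ℝ)+1) ≠ 0 := by positivity
      have hn : ((n:ℝ)+1) ≠ 0 := by positivity
      have hm : ((n:ℝ)+(k:ℝ)+2) ≠ 0 := by positivity
      field_simp
      ring
    rw [e] at h
    convert h using 1
    · rfl
    ring
  rw [Summable.tsum_prod' h1_summable (fun n => (hin n).summable)]
  rw [tsum_congr (fun n => (hin n).tsum_eq)]
  have hsplit : ∀ n : ℕ, (∑ i ∈ range (n+1), 1/((i:ℝ)+1)) / ((n:ℝ)+1)^9
      = (∑ i ∈ range n, 1/((i:ℝ)+1)) / ((n:ℝ)+1)^9 + 1/((n:ℝ)+1)^10 := by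
    intro n
    rw [Finset.sum_range_succ, _root_.add_div]
    congr 1
    rw [div_div]
    congr 1
    ring
  rw [tsum_congr hsplit]
  rw [Summable.tsum_add HH_summable (sumz (s := 10) (by norm_num))]
  rw [← dz_sigma]
  rfl

private lemma h2_eval : ∑' p : ℕ × ℕ, h2 p = dzeta 9 1 + dzeta 9 1 := by
  have hpt : ∀ p : ℕ × ℕ, h2 p = q1 p + q2 p := by
    intro p
    rw [h2, q1, q2]
    have ha : ((p.1:ℝ)+1) ≠ 0 := by positivity
    have hb : ((p.2:ℝ)+1) ≠ 0 := by positivity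
    have hm : ((p.1:ℝ)+(p.2:ℝ)+2) ≠ 0 := by positivity
    field_simp
    ring
  rw [tsum_congr hpt, Summable.tsum_add q1_summable q2_summable, ← dz_q1, ← dz_q2]

/-! ### The symmetric sum F -/

private def F (p : ℕ × ℕ) : ℝ :=
  t 2 8 p + (t 3 7 p + (t 4 6 p + (t 5 5 p + (t 6 4 p + (t 7 3 p + t 8 2 p)))))

private lemma s28 : Summable (t 2 8) := gridSummable (by norm_num) (by norm_num)
private lemma s37 : Summable (t 3 7) := gridSummable (by norm_num) (by norm_num)
private lemma s46 : Summable (t 4 6) := gridSummable (by norm_num) (by norm_num)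
private lemma s55 : Summable (t 5 5) := gridSummable (by norm_num) (by norm_num)
private lemma s64 : Summable (t 6 4) := gridSummable (by norm_num) (by norm_num)
private lemma s73 : Summable (t 7 3) := gridSummable (by norm_num) (by norm_num)
private lemma s82 : Summable (t 8 2) := gridSummable (by norm_num) (by norm_num)

private lemma c73 : Summable (fun p => t 7 3 p + t 8 2 p) := s73.add s82
private lemma c64 : Summable (fun p => t 6 4 p + (t 7 3 p + t 8 2 p)) := s64.add c73
private lemma c55 : Summable (fun p => t 5 5 p + (t 6 4 p + (t 7 3 p + t 8 2 p))) := s55.add c64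
private lemma c46 : Summable (fun p => t 4 6 p + (t 5 5 p + (t 6 4 p + (t 7 3 p + t 8 2 p)))) :=
  s46.add c55
private lemma c37 : Summable (fun p => t 3 7 p + (t 4 6 p + (t 5 5 p + (t 6 4 p + (t 7 3 p + t 8 2 p))))) :=
  s37.add c46

private lemma F_summable : Summable F := s28.add c37

private lemma F_value : ∑' p : ℕ × ℕ, F p =
    zeta 2 * zeta 8 + (zeta 3 * zeta 7 + (zeta 4 * zeta 6 + (zeta 5 * zeta 5 +
      (zeta 6 * zeta 4 + (zeta 7 * zeta 3 + zeta 8 * zeta 2))))) := by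
  show ∑' p : ℕ × ℕ, (t 2 8 p + (t 3 7 p + (t 4 6 p + (t 5 5 p + (t 6 4 p + (t 7 3 p + t 8 2 p)))))) = _
  rw [Summable.tsum_add s28 c37, Summable.tsum_add s37 c46, Summable.tsum_add s46 c55, Summable.tsum_add s55 c64,
    Summable.tsum_add s64 c73, Summable.tsum_add s73 s82]
  rw [zmul (a := 2) (b := 8) (by norm_num) (by norm_num),
    zmul (a := 3) (b := 7) (by norm_num) (by norm_num),
    zmul (a := 4) (b := 6) (by norm_num) (by norm_num),
    zmul (a := 5) (b := 5) (by norm_num) (by norm_num),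
    zmul (a := 6) (b := 4) (by norm_num) (by norm_num),
    zmul (a := 7) (b := 3) (by norm_num) (by norm_num),
    zmul (a := 8) (b := 2) (by norm_num) (by norm_num)]

private lemma Fdiag (n : ℕ) : F (n, n) = 7 * (1/((n:ℝ)+1)^10) := by
  simp only [F, t]
  have hn : ((n:ℝ)+1) ≠ 0 := by positivity
  field_simp
  ring

private lemma key2 (x y : ℝ) (hx : x ≠ 0) (hy : y ≠ 0) (hm : x + y ≠ 0) :
    1/((x+y)^2*y^8) + (1/((x+y)^3*y^7) + (1/((x+y)^4*y^6) + (1/((x+y)^5*y^5) +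
      (1/((x+y)^6*y^4) + (1/((x+y)^7*y^3) + 1/((x+y)^8*y^2))))))
    = 1/(x*(x+y)*y^8) - 1/(x*(x+y)^8*y) := by
  field_simp
  ring

private lemma keyF (p : ℕ × ℕ) : F (p.1 + p.2 + 1, p.1) = h1 p - h2 p := by
  have h := key2 ((p.2:ℝ)+1) ((p.1:ℝ)+1) (by positivity) (by positivity) (by positivity)
  simp only [F, t, h1, h2]
  push_cast
  linear_combination h

private lemma ALT_eval : (∑' q : {q : ℕ × ℕ // q.2 < q.1}, F q.1) = zeta 10 - dzeta 9 1 := by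
  rw [← eLT.tsum_eq (fun q : {q : ℕ × ℕ // q.2 < q.1} => F q.1)]
  have hc : ∀ p : ℕ × ℕ, F ((eLT p) : {q : ℕ × ℕ // q.2 < q.1}).1 = h1 p - h2 p :=
    fun p => keyF p
  rw [tsum_congr hc]
  rw [Summable.tsum_sub h1_summable h2_summable, h1_eval, h2_eval]
  ring

private lemma BGT_eval : (∑' q : {q : ℕ × ℕ // q.1 < q.2}, F q.1)
    = ∑' q : {q : ℕ × ℕ // q.2 < q.1}, F q.1 := by
  rw [← eSwap.tsum_eq (fun q : {q : ℕ × ℕ // q.1 < q.2} => F q.1)]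
  refine tsum_congr fun q => ?_
  show F (q.1.2, q.1.1) = F q.1
  simp only [F, t]
  ring

private lemma diag_eval : ∑' n : ℕ, F (n, n) = 7 * zeta 10 := by
  rw [tsum_congr Fdiag, tsum_mul_left]
  rfl

private lemma F_split :
    ∑' p : ℕ × ℕ, F p = (∑' q : {q : ℕ × ℕ // q.2 < q.1}, F q.1)
      + (∑' q : {q : ℕ × ℕ // q.1 < q.2}, F q.1) + ∑' n : ℕ, F (n, n) := by
  classical
  have hlt : Summable (fun q : {q : ℕ × ℕ // q.2 < q.1} => F q.1) :=
    F_summable.subtype {q : ℕ × ℕ | q.2 < q.1}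
  have hgt : Summable (fun q : {q : ℕ × ℕ // q.1 < q.2} => F q.1) :=
    F_summable.subtype {q : ℕ × ℕ | q.1 < q.2}
  have hdiag : Summable (fun n : ℕ => F (n, n)) := by
    refine ((sumz (s := 10) (by norm_num)).mul_left 7).congr fun n => ?_
    exact (Fdiag n).symm
  have hIlt : Summable (Set.indicator {q : ℕ × ℕ | q.2 < q.1} F) :=
    summable_subtype_iff_indicator.mp hlt
  have hIgt : Summable (Set.indicator {q : ℕ × ℕ | q.1 < q.2} F) :=
    summable_subtype_iff_indicator.mp hgt
  have hdsub : Summable (fun q : {q : ℕ × ℕ // q.1 = q.2} => F q.1) :=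
    eDiag.summable_iff.mp hdiag
  have hIdg : Summable (Set.indicator {q : ℕ × ℕ | q.1 = q.2} F) :=
    summable_subtype_iff_indicator.mp hdsub
  have hpt : ∀ p : ℕ × ℕ, F p = Set.indicator {q : ℕ × ℕ | q.2 < q.1} F p
      + Set.indicator {q : ℕ × ℕ | q.1 < q.2} F p
      + Set.indicator {q : ℕ × ℕ | q.1 = q.2} F p := by
    intro p
    by_cases h1 : p.2 < p.1
    · rw [Set.indicator_of_mem (show p ∈ {q : ℕ × ℕ | q.2 < q.1} from h1),
        Set.indicator_of_notMem (show p ∉ {q : ℕ × ℕ | q.1 < q.2} by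
          simp only [Set.mem_setOf_eq]; omega),
        Set.indicator_of_notMem (show p ∉ {q : ℕ × ℕ | q.1 = q.2} by
          simp only [Set.mem_setOf_eq]; omega)]
      ring
    · by_cases h2 : p.1 < p.2
      · rw [Set.indicator_of_notMem (show p ∉ {q : ℕ × ℕ | q.2 < q.1} from h1),
          Set.indicator_of_mem (show p ∈ {q : ℕ × ℕ | q.1 < q.2} from h2),
          Set.indicator_of_notMem (show p ∉ {q : ℕ × ℕ | q.1 = q.2} by
            simp only [Set.mem_setOf_eq]; omega)]
        ring
      · rw [Set.indicator_of_notMem (show p ∉ {q : ℕ × ℕ | q.2 < q.1} from h1),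
          Set.indicator_of_notMem (show p ∉ {q : ℕ × ℕ | q.1 < q.2} from h2),
          Set.indicator_of_mem (show p ∈ {q : ℕ × ℕ | q.1 = q.2} by
            simp only [Set.mem_setOf_eq]; omega)]
        ring
  rw [tsum_congr hpt, Summable.tsum_add (hIlt.add hIgt) hIdg, Summable.tsum_add hIlt hIgt]
  congr 1
  · congr 1
    · exact (tsum_subtype {q : ℕ × ℕ | q.2 < q.1} F).symm
    · exact (tsum_subtype {q : ℕ × ℕ | q.1 < q.2} F).symm
  · rw [← tsum_subtype {q : ℕ × ℕ | q.1 = q.2} F]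
    exact (eDiag.tsum_eq (fun q : {q : ℕ × ℕ // q.1 = q.2} => F q.1)).symm

/-! ### zetaStar decomposition -/

private lemma star_split : zetaStar 9 1 = dzeta 9 1 + zeta 10 := by
  classical
  have hdiag : Summable (fun n : ℕ => gz (n, n)) := by
    refine Summable.of_nonneg_of_le (fun n => by rw [gz]; positivity) (fun n => ?_)
      (sumz (s := 2) le_rfl)
    rw [gz]
    apply one_div_le_one_div_of_le (by positivity)
    calc ((n:ℝ)+1)^2 = ((n:ℝ)+1)^2 * 1 := by ring
    _ ≤ ((n:ℝ)+1)^9 * ((n:ℝ)+1)^1 := by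
        apply mul_le_mul (pow_le_pow_right₀ (onele n) (by norm_num))
          (by rw [pow_one]; exact onele n) (by norm_num) (by positivity)
  have hIlt : Summable (Set.indicator {q : ℕ × ℕ | q.2 < q.1} gz) :=
    summable_subtype_iff_indicator.mp gz_lt_summable
  have hdsub : Summable (fun q : {q : ℕ × ℕ // q.1 = q.2} => gz q.1) :=
    eDiag.summable_iff.mp hdiag
  have hIdg : Summable (Set.indicator {q : ℕ × ℕ | q.1 = q.2} gz) :=
    summable_subtype_iff_indicator.mp hdsub
  have hpt : ∀ p : ℕ × ℕ, Set.indicator {q : ℕ × ℕ | q.2 ≤ q.1} gz p =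
      Set.indicator {q : ℕ × ℕ | q.2 < q.1} gz p
      + Set.indicator {q : ℕ × ℕ | q.1 = q.2} gz p := by
    intro p
    by_cases h1 : p.2 < p.1
    · rw [Set.indicator_of_mem (show p ∈ {q : ℕ × ℕ | q.2 ≤ q.1} from le_of_lt h1),
        Set.indicator_of_mem (show p ∈ {q : ℕ × ℕ | q.2 < q.1} from h1),
        Set.indicator_of_notMem (show p ∉ {q : ℕ × ℕ | q.1 = q.2} by
          simp only [Set.mem_setOf_eq]; omega)]
      ring
    · by_cases h2 : p.1 = p.2
      · rw [Set.indicator_of_mem (show p ∈ {q : ℕ × ℕ | q.2 ≤ q.1} from le_of_eq h2.symm),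
          Set.indicator_of_notMem (show p ∉ {q : ℕ × ℕ | q.2 < q.1} from h1),
          Set.indicator_of_mem (show p ∈ {q : ℕ × ℕ | q.1 = q.2} from h2)]
        ring
      · rw [Set.indicator_of_notMem (show p ∉ {q : ℕ × ℕ | q.2 ≤ q.1} by
            simp only [Set.mem_setOf_eq]; omega),
          Set.indicator_of_notMem (show p ∉ {q : ℕ × ℕ | q.2 < q.1} from h1),
          Set.indicator_of_notMem (show p ∉ {q : ℕ × ℕ | q.1 = q.2} from h2)]
        ring
  have step1 : zetaStar 9 1 = ∑' p : ℕ × ℕ, Set.indicator {q : ℕ × ℕ | q.2 ≤ q.1} gz p :=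
    tsum_subtype {q : ℕ × ℕ | q.2 ≤ q.1} gz
  rw [step1, tsum_congr hpt, Summable.tsum_add hIlt hIdg]
  congr 1
  · rw [← tsum_subtype {q : ℕ × ℕ | q.2 < q.1} gz]
    exact dzeta_eq_gz.symm
  · rw [← tsum_subtype {q : ℕ × ℕ | q.1 = q.2} gz]
    have e1 : ∑' x : ↥{q : ℕ × ℕ | q.1 = q.2}, gz ↑x = ∑' n : ℕ, gz (n, n) :=
      (eDiag.tsum_eq (fun q : {q : ℕ × ℕ // q.1 = q.2} => gz q.1)).symm
    rw [e1, zeta]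
    refine tsum_congr fun n => ?_
    rw [gz, pow_one, ← pow_succ]

/-! ### Main theorem -/

/-- `ζ*(9,1) = ζ(2)ζ(8) − ζ(3)ζ(7) + ζ(4)ζ(6) − (1/2)ζ(5)²`. -/
theorem zetaStar_nine_one :
    zetaStar 9 1 =
      zeta 2 * zeta 8 - zeta 3 * zeta 7 + zeta 4 * zeta 6 - 1 / 2 * zeta 5 ^ 2 := by
  have hF2 : ∑' p : ℕ × ℕ, F p = (zeta 10 - dzeta 9 1) + (zeta 10 - dzeta 9 1) + 7 * zeta 10 := by
    rw [F_split, ALT_eval, BGT_eval, ALT_eval, diag_eval]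
  have key : zeta 2 * zeta 8 + (zeta 3 * zeta 7 + (zeta 4 * zeta 6 + (zeta 5 * zeta 5 +
      (zeta 6 * zeta 4 + (zeta 7 * zeta 3 + zeta 8 * zeta 2))))) = 9 * zeta 10 - 2 * dzeta 9 1 := by
    rw [← F_value, hF2]; ring
  have heven : zeta 10 * (11/2) = 2*(zeta 2 * zeta 8) + 2*(zeta 4 * zeta 6) := by
    rw [zeta2, zeta4, zeta6, zeta8, zeta10]; ring
  rw [star_split]
  linear_combination (1/2 : ℝ) * key + heven

end
end

section
/- The Euler decomposition formula: for integers i, j ≥ 2, ζ(i) ζ(j) = Σ_{k=1}^{i} C(i+j−k−1, j−1) ζ(i+j−k, k) + Σ_{k=1}^{j} C(i+j−k−1, i−1) ζ(i+j−k, k), where ζ(a, b) = Σ_{m > n ≥ 1} m^{−a} n^{−b} is the double zeta value (with the convention that the terms with k = 1 involve the conditionally interpretable ζ(i+j−1, 1) which converges since i+j−1 ≥ 3). -/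
open scoped BigOperators

noncomputable section

/-! ### Auxiliary lemmas -/

section Aux

lemma rec_aux (a b : ℕ) (x y : ℝ) (hx : 0 < x) (hy : 0 < y) :
    1/(x^(a+1) * y^(b+1)) = (1/(x+y)) * (1/(x^a * y^(b+1)) + 1/(x^(a+1) * y^b)) := by
  have hxy : (0:ℝ) < x + y := by linarith
  field_simp
  ring

lemma pf (i j : ℕ) (x y : ℝ) (hx : 0 < x) (hy : 0 < y) :
    1/(x^(i+1) * y^(j+1)) =
      (∑ k ∈ Finset.range (i+1), ((j+k).choose j : ℝ) / ((x+y)^(j+1+k) * x^(i+1-k)))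
    + (∑ k ∈ Finset.range (j+1), ((i+k).choose i : ℝ) / ((x+y)^(i+1+k) * y^(j+1-k))) := by
  have hxy : (0:ℝ) < x + y := by linarith
  induction i generalizing j with
  | zero =>
    induction j with
    | zero =>
      simp only [Finset.sum_range_one, Nat.choose_self, Nat.choose_zero_right, zero_add, add_zero]
      push_cast
      field_simp
      ring
    | succ j ihj =>
      rw [rec_aux 0 (j+1) x y hx hy, ihj]
      rw [Finset.sum_range_succ' (fun k => (((0:ℕ)+k).choose 0 : ℝ)/((x+y)^(0+1+k)*y^(j+1+1-k))) (j+1)]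
      have hsum : (1/(x+y)) * ∑ k ∈ Finset.range (j+1),
            (((0:ℕ)+k).choose 0 : ℝ)/((x+y)^(0+1+k)*y^(j+1-k))
          = ∑ k ∈ Finset.range (j+1),
            (((0:ℕ)+(k+1)).choose 0 : ℝ)/((x+y)^(0+1+(k+1))*y^(j+1+1-(k+1))) := by
        rw [Finset.mul_sum]
        refine Finset.sum_congr rfl fun k hk => ?_
        have h1 : j+1+1-(k+1) = j+1-k := by omega
        rw [h1]
        simp only [Nat.choose_zero_right, Nat.cast_one, zero_add]
        rw [show (1:ℕ)+(k+1) = (1+k)+1 by omega, pow_succ]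
        field_simp
      rw [← hsum]
      simp only [Finset.sum_range_one, Nat.choose_self, Nat.choose_zero_right, zero_add,
        Nat.cast_one, pow_zero, one_mul, Nat.add_sub_cancel, Nat.sub_zero, add_zero]
      have h2 : (x+y)^(j+1+1) ≠ 0 := by positivity
      have h3 : (x+y)^(j+1) ≠ 0 := by positivity
      field_simp
      ring
  | succ i ih =>
    induction j with
    | zero =>
      rw [rec_aux (i+1) 0 x y hx hy, ih 0]
      rw [Finset.sum_range_succ' (fun k => (((0:ℕ)+k).choose 0 : ℝ)/((x+y)^(0+1+k)*x^(i+1+1-k))) (i+1)]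
      have hsum : (1/(x+y)) * ∑ k ∈ Finset.range (i+1),
            (((0:ℕ)+k).choose 0 : ℝ)/((x+y)^(0+1+k)*x^(i+1-k))
          = ∑ k ∈ Finset.range (i+1),
            (((0:ℕ)+(k+1)).choose 0 : ℝ)/((x+y)^(0+1+(k+1))*x^(i+1+1-(k+1))) := by
        rw [Finset.mul_sum]
        refine Finset.sum_congr rfl fun k hk => ?_
        have h1 : i+1+1-(k+1) = i+1-k := by omega
        rw [h1]
        simp only [Nat.choose_zero_right, Nat.cast_one, zero_add]
        rw [show (1:ℕ)+(k+1) = (1+k)+1 by omega, pow_succ]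
        field_simp
      rw [← hsum]
      simp only [Finset.sum_range_one, Nat.choose_self, Nat.choose_zero_right, zero_add,
        Nat.cast_one, pow_zero, one_mul, Nat.add_sub_cancel, Nat.sub_zero, add_zero]
      have h2 : (x+y)^(i+1+1) ≠ 0 := by positivity
      have h3 : (x+y)^(i+1) ≠ 0 := by positivity
      field_simp
      ring
    | succ j ihj =>
      rw [rec_aux (i+1) (j+1) x y hx hy, ih (j+1), ihj]
      -- peel k=0 from the target sums
      rw [Finset.sum_range_succ' (fun k => ((j+1+k).choose (j+1) : ℝ)/((x+y)^(j+1+1+k)*x^(i+1+1-k))) (i+1)]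
      rw [Finset.sum_range_succ' (fun k => ((i+1+k).choose (i+1) : ℝ)/((x+y)^(i+1+1+k)*y^(j+1+1-k))) (j+1)]
      -- peel k=0 from the source sums with larger range
      rw [Finset.sum_range_succ' (fun k => ((i+k).choose i : ℝ)/((x+y)^(i+1+k)*y^(j+1+1-k))) (j+1)]
      rw [Finset.sum_range_succ' (fun k => ((j+k).choose j : ℝ)/((x+y)^(j+1+k)*x^(i+1+1-k))) (i+1)]
      have hT1 : ∑ k ∈ Finset.range (i+1),
            ((j+1+(k+1)).choose (j+1) : ℝ)/((x+y)^(j+1+1+(k+1))*x^(i+1+1-(k+1)))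
          = (1/(x+y)) * (∑ k ∈ Finset.range (i+1),
              ((j+1+k).choose (j+1) : ℝ)/((x+y)^(j+1+1+k)*x^(i+1-k)))
          + (1/(x+y)) * (∑ k ∈ Finset.range (i+1),
              ((j+(k+1)).choose j : ℝ)/((x+y)^(j+1+(k+1))*x^(i+1+1-(k+1)))) := by
        rw [Finset.mul_sum, Finset.mul_sum, ← Finset.sum_add_distrib]
        refine Finset.sum_congr rfl fun k hk => ?_
        have e1 : i+1+1-(k+1) = i+1-k := by omega
        have e2 : j+1+(k+1) = j+1+1+k := by omega
        have e3 : j+(k+1) = j+1+k := by omega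
        have e4 : j+1+1+(k+1) = (j+1+1+k)+1 := by omega
        have e5 : j+1+(k+1) = (j+1+k)+1 := by omega
        rw [e1, e3]
        rw [show ((j+1+(k+1)).choose (j+1)) = ((j+1+k)+1).choose (j+1) by rw [e5]]
        rw [Nat.choose_succ_succ' (j+1+k) j]
        rw [e4, pow_succ, e2]
        push_cast
        have h2 : (x+y)^(j+1+1+k) ≠ 0 := by positivity
        have h3 : x^(i+1-k) ≠ 0 := by positivity
        field_simp
        ring
      have hT2 : ∑ k ∈ Finset.range (j+1),
            ((i+1+(k+1)).choose (i+1) : ℝ)/((x+y)^(i+1+1+(k+1))*y^(j+1+1-(k+1)))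
          = (1/(x+y)) * (∑ k ∈ Finset.range (j+1),
              ((i+1+k).choose (i+1) : ℝ)/((x+y)^(i+1+1+k)*y^(j+1-k)))
          + (1/(x+y)) * (∑ k ∈ Finset.range (j+1),
              ((i+(k+1)).choose i : ℝ)/((x+y)^(i+1+(k+1))*y^(j+1+1-(k+1)))) := by
        rw [Finset.mul_sum, Finset.mul_sum, ← Finset.sum_add_distrib]
        refine Finset.sum_congr rfl fun k hk => ?_
        have e1 : j+1+1-(k+1) = j+1-k := by omega
        have e2 : i+1+(k+1) = i+1+1+k := by omega
        have e3 : i+(k+1) = i+1+k := by omega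
        have e4 : i+1+1+(k+1) = (i+1+1+k)+1 := by omega
        have e5 : i+1+(k+1) = (i+1+k)+1 := by omega
        rw [e1, e3]
        rw [show ((i+1+(k+1)).choose (i+1)) = ((i+1+k)+1).choose (i+1) by rw [e5]]
        rw [Nat.choose_succ_succ' (i+1+k) i]
        rw [e4, pow_succ, e2]
        push_cast
        have h2 : (x+y)^(i+1+1+k) ≠ 0 := by positivity
        have h3 : y^(j+1-k) ≠ 0 := by positivity
        field_simp
        ring
      rw [hT1, hT2]
      simp only [Nat.choose_self, Nat.choose_zero_right, Nat.cast_one, Nat.add_zero, add_zero,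
        Nat.sub_zero, zero_add]
      have h2 : (x+y)^(j+1+1) ≠ 0 := by positivity
      have h3 : (x+y)^(i+1+1) ≠ 0 := by positivity
      have h4 : (x+y)^(j+1) ≠ 0 := by positivity
      have h5 : (x+y)^(i+1) ≠ 0 := by positivity
      have h6 : x^(i+1+1) ≠ 0 := by positivity
      have h7 : y^(j+1+1) ≠ 0 := by positivity
      field_simp
      ring

lemma icc_to_range (n : ℕ) (F : ℕ → ℝ) :
    ∑ k ∈ Finset.Icc 1 (n+1), F k = ∑ k ∈ Finset.range (n+1), F (n+1-k) := by
  refine Finset.sum_nbij' (fun k => n+1-k) (fun k => n+1-k) ?_ ?_ ?_ ?_ ?_ <;>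
    simp only [Finset.mem_Icc, Finset.mem_range] <;> intro a ha
  · omega
  · omega
  · omega
  · omega
  · congr 1; omega

lemma pf_icc (i j : ℕ) (hi : 1 ≤ i) (hj : 1 ≤ j) (x y : ℝ) (hx : 0 < x) (hy : 0 < y) :
    1/(x^i * y^j) =
      (∑ k ∈ Finset.Icc 1 i, ((i+j-k-1).choose (j-1) : ℝ) / ((x+y)^(i+j-k) * x^k))
    + (∑ k ∈ Finset.Icc 1 j, ((i+j-k-1).choose (i-1) : ℝ) / ((x+y)^(i+j-k) * y^k)) := by
  obtain ⟨a, rfl⟩ : ∃ a, i = a + 1 := ⟨i - 1, by omega⟩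
  obtain ⟨b, rfl⟩ : ∃ b, j = b + 1 := ⟨j - 1, by omega⟩
  rw [icc_to_range a (fun k => ((a+1+(b+1)-k-1).choose (b+1-1) : ℝ) / ((x+y)^(a+1+(b+1)-k) * x^k))]
  rw [icc_to_range b (fun k => ((a+1+(b+1)-k-1).choose (a+1-1) : ℝ) / ((x+y)^(a+1+(b+1)-k) * y^k))]
  rw [pf a b x y hx hy]
  congr 1
  · refine Finset.sum_congr rfl fun k hk => ?_
    simp only [Finset.mem_range] at hk
    have e1 : a+1+(b+1)-(a+1-k)-1 = b+k := by omega
    have e2 : b+1-1 = b := by omega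
    have e3 : a+1+(b+1)-(a+1-k) = b+1+k := by omega
    rw [e1, e2, e3]
  · refine Finset.sum_congr rfl fun k hk => ?_
    simp only [Finset.mem_range] at hk
    have e1 : a+1+(b+1)-(b+1-k)-1 = a+k := by omega
    have e2 : a+1-1 = a := by omega
    have e3 : a+1+(b+1)-(b+1-k) = a+1+k := by omega
    rw [e1, e2, e3]

lemma summable_shift (s : ℕ) (hs : 2 ≤ s) : Summable (fun n : ℕ => 1/((n:ℝ)+1)^s) := by
  have h : Summable (fun n : ℕ => 1/(n:ℝ)^s) := Real.summable_one_div_nat_pow.mpr (by omega)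
  have h2 := (summable_nat_add_iff 1).mpr h
  refine h2.congr fun n => ?_
  push_cast
  ring_nf

lemma summable_shift_norm (s : ℕ) (hs : 2 ≤ s) :
    Summable (fun n : ℕ => ‖1/((n:ℝ)+1)^s‖) := by
  refine (summable_shift s hs).congr fun n => ?_
  rw [Real.norm_of_nonneg (by positivity)]

lemma prod_summable (a b : ℕ) (ha : 2 ≤ a) (hb : 2 ≤ b) :
    Summable (fun p : ℕ×ℕ => 1/(((p.1:ℝ)+1)^a * ((p.2:ℝ)+1)^b)) := by
  have h := summable_mul_of_summable_norm (summable_shift_norm a ha) (summable_shift_norm b hb)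
  refine h.congr fun p => ?_
  rw [div_mul_div_comm, one_mul]

lemma summable_F (s k : ℕ) (hs : 2 ≤ s) (h4 : 4 ≤ s + k) :
    Summable (fun p : ℕ×ℕ => 1/(((p.1:ℝ)+(p.2:ℝ)+2)^s * ((p.1:ℝ)+1)^k)) := by
  have hmain := prod_summable (s+k-2) 2 (by omega) le_rfl
  refine hmain.of_nonneg_of_le (fun p => by positivity) fun p => ?_
  set x : ℝ := (p.1:ℝ) with hxdef
  set y : ℝ := (p.2:ℝ) with hydef
  have hx : (0:ℝ) ≤ x := Nat.cast_nonneg _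
  have hy : (0:ℝ) ≤ y := Nat.cast_nonneg _
  have hb : ((x+1)^(s+k-2) * (y+1)^2) ≤ (x+y+2)^s * (x+1)^k := by
    have e : s = (s-2) + 2 := by omega
    have e2 : s+k-2 = (s-2) + k := by omega
    rw [e2, pow_add, e, pow_add]
    calc (x+1)^(s-2) * (x+1)^k * (y+1)^2
        ≤ (x+y+2)^(s-2) * (x+1)^k * (x+y+2)^2 := by gcongr <;> linarith
      _ = (x+y+2)^(s-2) * (x+y+2)^2 * (x+1)^k := by ring
  have hpos : (0:ℝ) < (x+1)^(s+k-2) * (y+1)^2 := by positivity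
  exact one_div_le_one_div_of_le hpos hb

lemma summable_F' (s k : ℕ) (hs : 2 ≤ s) (h4 : 4 ≤ s + k) :
    Summable (fun p : ℕ×ℕ => 1/(((p.1:ℝ)+(p.2:ℝ)+2)^s * ((p.2:ℝ)+1)^k)) := by
  have h := (summable_F s k hs h4)
  have h2 := (Equiv.prodComm ℕ ℕ).summable_iff.mpr h
  refine h2.congr fun p => ?_
  simp only [Function.comp_apply, Equiv.prodComm_apply, Prod.fst_swap, Prod.snd_swap]
  ring_nf

/-- Reindexing `ℕ × ℕ` onto pairs `n < m` via `(x, y) ↦ (x + y + 1, x)`. -/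
def eFst : ℕ × ℕ ≃ {q : ℕ × ℕ // q.2 < q.1} where
  toFun p := ⟨(p.1 + p.2 + 1, p.1), Nat.lt_succ_of_le (Nat.le_add_right _ _)⟩
  invFun q := (q.1.2, q.1.1 - q.1.2 - 1)
  left_inv p := by ext <;> simp <;> omega
  right_inv q := by
    have := q.2
    ext <;> simp <;> omega

/-- Reindexing `ℕ × ℕ` onto pairs `n < m` via `(x, y) ↦ (x + y + 1, y)`. -/
def eSnd : ℕ × ℕ ≃ {q : ℕ × ℕ // q.2 < q.1} where
  toFun p := ⟨(p.1 + p.2 + 1, p.2), Nat.lt_succ_of_le (Nat.le_add_left _ _)⟩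
  invFun q := (q.1.1 - q.1.2 - 1, q.1.2)
  left_inv p := by ext <;> simp <;> omega
  right_inv q := by
    have := q.2
    ext <;> simp <;> omega

lemma dzeta_eq (s k : ℕ) :
    dzeta s k = ∑' p : ℕ×ℕ, 1/(((p.1:ℝ)+(p.2:ℝ)+2)^s * ((p.1:ℝ)+1)^k) := by
  rw [dzeta, ← Equiv.tsum_eq eFst
    (fun q : {q : ℕ × ℕ // q.2 < q.1} => 1 / (((q.1.1 : ℝ) + 1) ^ s * ((q.1.2 : ℝ) + 1) ^ k))]
  refine tsum_congr fun p => ?_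
  simp only [eFst, Equiv.coe_fn_mk]
  push_cast
  ring_nf

lemma dzeta_eq' (s k : ℕ) :
    dzeta s k = ∑' p : ℕ×ℕ, 1/(((p.1:ℝ)+(p.2:ℝ)+2)^s * ((p.2:ℝ)+1)^k) := by
  rw [dzeta, ← Equiv.tsum_eq eSnd
    (fun q : {q : ℕ × ℕ // q.2 < q.1} => 1 / (((q.1.1 : ℝ) + 1) ^ s * ((q.1.2 : ℝ) + 1) ^ k))]
  refine tsum_congr fun p => ?_
  simp only [eSnd, Equiv.coe_fn_mk]
  push_cast
  ring_nf

end Aux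

/-- Euler decomposition formula: for `i, j ≥ 2`,
`ζ(i)ζ(j) = Σ_{k=1}^{i} C(i+j−k−1, j−1) ζ(i+j−k, k) + Σ_{k=1}^{j} C(i+j−k−1, i−1) ζ(i+j−k, k)`. -/
theorem euler_decomposition (i j : ℕ) (hi : 2 ≤ i) (hj : 2 ≤ j) :
    zeta i * zeta j =
      (∑ k ∈ Finset.Icc 1 i, ((i + j - k - 1).choose (j - 1) : ℝ) * dzeta (i + j - k) k) +
      (∑ k ∈ Finset.Icc 1 j, ((i + j - k - 1).choose (i - 1) : ℝ) * dzeta (i + j - k) k) := by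
  have hL : zeta i * zeta j = ∑' p : ℕ×ℕ, 1/(((p.1:ℝ)+1)^i * ((p.2:ℝ)+1)^j) := by
    rw [zeta, zeta, tsum_mul_tsum_of_summable_norm (summable_shift_norm i hi)
      (summable_shift_norm j hj)]
    exact tsum_congr fun p => by rw [div_mul_div_comm, one_mul]
  have hsum1 : ∀ k ∈ Finset.Icc 1 i, Summable (fun p : ℕ×ℕ =>
      ((i+j-k-1).choose (j-1) : ℝ) * (1/(((p.1:ℝ)+(p.2:ℝ)+2)^(i+j-k) * ((p.1:ℝ)+1)^k))) := by
    intro k hk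
    simp only [Finset.mem_Icc] at hk
    exact (summable_F (i+j-k) k (by omega) (by omega)).mul_left _
  have hsum2 : ∀ k ∈ Finset.Icc 1 j, Summable (fun p : ℕ×ℕ =>
      ((i+j-k-1).choose (i-1) : ℝ) * (1/(((p.1:ℝ)+(p.2:ℝ)+2)^(i+j-k) * ((p.2:ℝ)+1)^k))) := by
    intro k hk
    simp only [Finset.mem_Icc] at hk
    exact (summable_F' (i+j-k) k (by omega) (by omega)).mul_left _
  have hR1 : ∑ k ∈ Finset.Icc 1 i, ((i+j-k-1).choose (j-1) : ℝ) * dzeta (i+j-k) k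
      = ∑' p : ℕ×ℕ, ∑ k ∈ Finset.Icc 1 i,
        ((i+j-k-1).choose (j-1) : ℝ) * (1/(((p.1:ℝ)+(p.2:ℝ)+2)^(i+j-k) * ((p.1:ℝ)+1)^k)) := by
    rw [Summable.tsum_finsetSum hsum1]
    refine Finset.sum_congr rfl fun k hk => ?_
    rw [dzeta_eq, tsum_mul_left]
  have hR2 : ∑ k ∈ Finset.Icc 1 j, ((i+j-k-1).choose (i-1) : ℝ) * dzeta (i+j-k) k
      = ∑' p : ℕ×ℕ, ∑ k ∈ Finset.Icc 1 j,
        ((i+j-k-1).choose (i-1) : ℝ) * (1/(((p.1:ℝ)+(p.2:ℝ)+2)^(i+j-k) * ((p.2:ℝ)+1)^k)) := by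
    rw [Summable.tsum_finsetSum hsum2]
    refine Finset.sum_congr rfl fun k hk => ?_
    rw [dzeta_eq', tsum_mul_left]
  rw [hL, hR1, hR2, ← Summable.tsum_add (summable_sum hsum1) (summable_sum hsum2)]
  refine tsum_congr fun p => ?_
  have hx : (0:ℝ) < (p.1:ℝ)+1 := by positivity
  have hy : (0:ℝ) < (p.2:ℝ)+1 := by positivity
  have hpf := pf_icc i j (by omega) (by omega) ((p.1:ℝ)+1) ((p.2:ℝ)+1) hx hy
  have hxy : ((p.1:ℝ)+1) + ((p.2:ℝ)+1) = (p.1:ℝ)+(p.2:ℝ)+2 := by ring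
  rw [hxy] at hpf
  rw [hpf]
  congr 1 <;> exact Finset.sum_congr rfl fun k hk => by rw [mul_one_div]
end
end

section
/- For integers m, n ≥ 0 and k ≥ 1, in H_t = Q[t]⟨x,y⟩: x^m ⧢_t x^n y^k = Σ_{m₁+m₂=m, m_i≥0} C(m₁+n−1, m₁) x^{m₁+n} (B − t·C), where B = Σ_{a₁+⋯+a_{k+1}=m₂, a_i≥0} x^{a₁} y x^{a₂} y ⋯ x^{a_k} y x^{a_{k+1}} and C = Σ_{i=0}^{m₂−1} Σ_{a₁+⋯+a_k=i, a_j≥0} x^{a₁}y⋯x^{a_{k−1}} y x^{a_k+m₂−i+1}; that is, x^m ⧢_t x^n y^k = Σ_{m₁+m₂=m} C(m₁+n−1, m₁) x^{m₁+n} (x^0 ⧢_t-expansion of y^k against x^{m₂}) as in the formula x^{m₂} ⧢_t y^k. -/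
open scoped BigOperators

noncomputable section

abbrev Rt : Type := Polynomial ℚ
abbrev Ht : Type := MonoidAlgebra Rt (FreeMonoid (Fin 2))

/-- The word `l` as an element of `H_t`. -/
def wd (l : List (Fin 2)) : Ht :=
  MonoidAlgebra.of Rt (FreeMonoid (Fin 2)) (FreeMonoid.ofList l)

/-- The letter `x`. -/
def wx : Ht := wd [0]
/-- The letter `y`. -/
def wy : Ht := wd [1]

/-- ρ(x) = 0, ρ(y) = t·x. -/
def ρt : Fin 2 → Ht := fun a => if a = 1 then (Polynomial.X : Rt) • wx else 0

/-- δ: indicator of the empty word. -/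
def δw : List (Fin 2) → Rt := fun w => if w = [] then 1 else 0

/-- The t-shuffle product on words. -/
def tshW : List (Fin 2) → List (Fin 2) → Ht
  | [], w => wd w
  | a :: w, [] => wd (a :: w)
  | a :: w1, b :: w2 =>
      wd [a] * tshW w1 (b :: w2) + wd [b] * tshW (a :: w1) w2
        - δw w1 • (ρt a * wd (b :: w2)) - δw w2 • (ρt b * wd (a :: w1))
  termination_by w1 w2 => w1.length + w2.length

/-- The ordinary shuffle product (t = 0 case) on words. -/
def shW : List (Fin 2) → List (Fin 2) → Ht
  | [], w => wd w
  | a :: w, [] => wd (a :: w)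
  | a :: w1, b :: w2 =>
      wd [a] * shW w1 (b :: w2) + wd [b] * shW (a :: w1) w2
  termination_by w1 w2 => w1.length + w2.length

/-- The t-shuffle product on `H_t`, extended Q[t]-bilinearly. -/
def tshH (u v : Ht) : Ht :=
  u.coeff.sum fun w1 c1 => v.coeff.sum fun w2 c2 =>
    (c1 * c2) • tshW (FreeMonoid.toList w1) (FreeMonoid.toList w2)

/-- The ordinary shuffle product on `H_t`, extended Q[t]-bilinearly. -/
def shH (u v : Ht) : Ht :=
  u.coeff.sum fun w1 c1 => v.coeff.sum fun w2 c2 =>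
    (c1 * c2) • shW (FreeMonoid.toList w1) (FreeMonoid.toList w2)

/-! ### Auxiliary lemmas -/

lemma wd_nil : wd [] = 1 := by simp [wd]; rfl

lemma wd_append (l1 l2 : List (Fin 2)) : wd (l1 ++ l2) = wd l1 * wd l2 := by
  unfold wd; rw [← map_mul]; rfl

lemma wd_replicate_x (m : ℕ) : wd (List.replicate m 0) = wx ^ m := by
  induction m with
  | zero => simp [wd_nil]
  | succ m ih =>
      rw [List.replicate_succ,
        show ((0:Fin 2) :: List.replicate m 0) = [0] ++ List.replicate m 0 from rfl,
        wd_append, ih, pow_succ', wx]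

lemma wd_replicate_y (m : ℕ) : wd (List.replicate m 1) = wy ^ m := by
  induction m with
  | zero => simp [wd_nil]
  | succ m ih =>
      rw [List.replicate_succ,
        show ((1:Fin 2) :: List.replicate m 1) = [1] ++ List.replicate m 1 from rfl,
        wd_append, ih, pow_succ', wy]

lemma tshH_wd (l1 l2 : List (Fin 2)) : tshH (wd l1) (wd l2) = tshW l1 l2 := by
  simp only [tshH, wd, MonoidAlgebra.of_apply, MonoidAlgebra.coeff_single]
  rw [Finsupp.sum_single_index, Finsupp.sum_single_index]
  · simp
  · simp
  · simp [Finsupp.sum_fun_zero]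

lemma tshW_nil_left (l : List (Fin 2)) : tshW [] l = wd l := by rw [tshW]

lemma tshW_nil_right (l : List (Fin 2)) : tshW l [] = wd l := by
  cases l with
  | nil => rw [tshW]
  | cons a w => rw [tshW]

lemma wd0 : wd [0] = wx := rfl

lemma wd1 : wd [1] = wy := rfl

lemma ρt_zero : ρt 0 = 0 := by simp [ρt]

lemma ρt_one : ρt 1 = (Polynomial.X : Rt) • wx := by simp [ρt]

lemma δw_nil : δw [] = 1 := rfl

lemma δw_cons (a : Fin 2) (l : List (Fin 2)) : δw (a :: l) = 0 := by simp [δw]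

/-! ### Sums over antidiagonal tuples -/

lemma sum_AT_cons {M : Type*} [AddCommMonoid M] (k n : ℕ) (f : (Fin (k+1) → ℕ) → M) :
    ∑ c ∈ Finset.Nat.antidiagonalTuple (k+1) n, f c
      = ∑ p ∈ Finset.HasAntidiagonal.antidiagonal n, ∑ d ∈ Finset.Nat.antidiagonalTuple k p.2, f (Fin.cons p.1 d) := by
  rw [Finset.sum_sigma']
  refine Finset.sum_nbij' (i := fun x => Fin.cons x.1.1 x.2)
    (j := fun c => ⟨(c 0, ∑ j, Fin.tail c j), Fin.tail c⟩) ?_ ?_ ?_ ?_ ?_ |>.symm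
  · rintro ⟨⟨a, b⟩, d⟩ h
    simp only [Finset.mem_sigma, Finset.HasAntidiagonal.mem_antidiagonal, Finset.Nat.mem_antidiagonalTuple] at h ⊢
    rw [Fin.sum_cons, h.2, h.1]
  · intro c hc
    simp only [Finset.Nat.mem_antidiagonalTuple, Finset.mem_sigma, Finset.HasAntidiagonal.mem_antidiagonal] at hc ⊢
    refine ⟨?_, trivial⟩
    rw [← hc, ← Fin.sum_cons (c 0) (Fin.tail c), Fin.cons_self_tail]
  · rintro ⟨⟨a, b⟩, d⟩ h
    simp only [Finset.mem_sigma, Finset.HasAntidiagonal.mem_antidiagonal, Finset.Nat.mem_antidiagonalTuple] at h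
    simp [Fin.tail_cons, h.2]
  · intro c hc
    simp [Fin.cons_self_tail]
  · intros; rfl

lemma sum_range_antidiagonal {M : Type*} [AddCommMonoid M] (n : ℕ) (f : ℕ → ℕ → M) :
    ∑ i ∈ Finset.range n, ∑ p ∈ Finset.HasAntidiagonal.antidiagonal i, f p.1 p.2
      = ∑ a ∈ Finset.range n, ∑ b ∈ Finset.range (n - a), f a b := by
  induction n with
  | zero => simp
  | succ n ih =>
    rw [Finset.sum_range_succ, ih, Finset.Nat.sum_antidiagonal_eq_sum_range_succ_mk]
    have h1 : ∑ a ∈ Finset.range (n+1), ∑ b ∈ Finset.range (n + 1 - a), f a b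
        = (∑ a ∈ Finset.range n, ∑ b ∈ Finset.range (n - a), f a b)
          + ∑ a ∈ Finset.range (n+1), f a (n - a) := by
      rw [Finset.sum_range_succ (f := fun a => ∑ b ∈ Finset.range (n + 1 - a), f a b),
        Finset.sum_range_succ (f := fun a => f a (n - a))]
      have h2 : ∑ a ∈ Finset.range n, ∑ b ∈ Finset.range (n + 1 - a), f a b
          = ∑ a ∈ Finset.range n, (∑ b ∈ Finset.range (n - a), f a b + f a (n - a)) := by
        refine Finset.sum_congr rfl fun a ha => ?_
        have := Finset.mem_range.mp ha
        rw [show n + 1 - a = (n - a) + 1 by omega, Finset.sum_range_succ]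
      rw [h2, Finset.sum_add_distrib, show n + 1 - n = 1 by omega, Nat.sub_self]
      have h3 : ∑ b ∈ Finset.range 1, f n b = f n 0 := by simp
      rw [h3]
      abel
    rw [h1]

/-! ### The B and C sums -/

/-- The prefix product `x^{c₀} y x^{c₁} y ⋯ x^{c_{k-1}} y`. -/
def Pk (k : ℕ) (c : Fin (k+1) → ℕ) : Ht :=
  (List.ofFn fun j : Fin k => wx ^ c j.castSucc * wy).prod

lemma Pk_cons (k a : ℕ) (d : Fin (k+1) → ℕ) :
    Pk (k+1) (Fin.cons a d) = (wx ^ a * wy) * Pk k d := by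
  have h1 : ∀ i : Fin k, (Fin.cons a d : Fin (k+2) → ℕ) ((i.succ).castSucc) = d i.castSucc := by
    intro i; rw [← Fin.succ_castSucc, Fin.cons_succ]
  simp only [Pk, List.ofFn_succ, List.prod_cons, Fin.castSucc_zero, Fin.cons_zero, h1]

lemma cons_last (k a : ℕ) (d : Fin (k+1) → ℕ) :
    (Fin.cons a d : Fin (k+2) → ℕ) (Fin.last (k+1)) = d (Fin.last k) := by
  rw [← Fin.succ_last, Fin.cons_succ]

/-- `B_{k+1}^m`. -/
def Bk (k m : ℕ) : Ht :=
  ∑ c ∈ Finset.Nat.antidiagonalTuple (k+1) m, Pk k c * wx ^ c (Fin.last k)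

/-- `C_{k+1}^{m-1}` (note the index shift: this is the `C`-sum with `k+1` rows). -/
def Ck (k m : ℕ) : Ht :=
  ∑ i ∈ Finset.range m, ∑ d ∈ Finset.Nat.antidiagonalTuple (k+1) i,
    Pk k d * wx ^ (d (Fin.last k) + m - i + 1)

lemma Bk_zero_right (k : ℕ) : Bk k 0 = wy ^ k := by
  simp [Bk, Pk, Finset.Nat.antidiagonalTuple_zero_right, List.ofFn_const]

lemma Bk_zero_left (m : ℕ) : Bk 0 m = wx ^ m := by
  simp [Bk, Pk, Finset.Nat.antidiagonalTuple_one]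

lemma Bk_conv (k n : ℕ) :
    Bk (k+1) n = ∑ p ∈ Finset.HasAntidiagonal.antidiagonal n, wx ^ p.1 * (wy * Bk k p.2) := by
  rw [Bk, sum_AT_cons]
  refine Finset.sum_congr rfl fun p hp => ?_
  rw [Bk, Finset.mul_sum, Finset.mul_sum]
  refine Finset.sum_congr rfl fun e he => ?_
  rw [Pk_cons, cons_last, mul_assoc, mul_assoc]

lemma Bk_succ (k m : ℕ) : Bk (k+1) (m+1) = wx * Bk (k+1) m + wy * Bk k (m+1) := by
  rw [Bk_conv, Bk_conv, Finset.Nat.sum_antidiagonal_succ]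
  simp only [pow_zero, one_mul, pow_succ']
  rw [Finset.mul_sum, add_comm]
  refine congrArg (· + wy * Bk k (m+1)) ?_
  exact Finset.sum_congr rfl fun p _ => by rw [mul_assoc]

lemma Ck_zero_right (k : ℕ) : Ck k 0 = 0 := by simp [Ck]

lemma Ck_zero_left (m : ℕ) : Ck 0 m = m • wx ^ (m+1) := by
  simp [Ck, Finset.Nat.antidiagonalTuple_one, Pk, Nat.add_sub_cancel_left]

lemma Ck_conv (k n : ℕ) :
    Ck (k+1) n = ∑ a ∈ Finset.range n, wx ^ a * (wy * Ck k (n - a)) := by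
  rw [Ck]
  calc ∑ i ∈ Finset.range n, ∑ d ∈ Finset.Nat.antidiagonalTuple (k+2) i,
        Pk (k+1) d * wx ^ (d (Fin.last (k+1)) + n - i + 1)
      = ∑ i ∈ Finset.range n, ∑ p ∈ Finset.HasAntidiagonal.antidiagonal i,
          ∑ e ∈ Finset.Nat.antidiagonalTuple (k+1) p.2,
            wx ^ p.1 * (wy * (Pk k e * wx ^ (e (Fin.last k) + (n - p.1) - p.2 + 1))) := by
        refine Finset.sum_congr rfl fun i hi => ?_
        rw [sum_AT_cons]
        refine Finset.sum_congr rfl fun p hp => Finset.sum_congr rfl fun e he => ?_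
        have hp' := Finset.HasAntidiagonal.mem_antidiagonal.mp hp
        have hi' := Finset.mem_range.mp hi
        rw [Pk_cons, cons_last,
          show e (Fin.last k) + n - i + 1 = e (Fin.last k) + (n - p.1) - p.2 + 1 by omega,
          mul_assoc, mul_assoc]
    _ = ∑ a ∈ Finset.range n, wx ^ a * (wy * Ck k (n - a)) := by
        rw [sum_range_antidiagonal n (f := fun a b =>
          ∑ e ∈ Finset.Nat.antidiagonalTuple (k+1) b,
            wx ^ a * (wy * (Pk k e * wx ^ (e (Fin.last k) + (n - a) - b + 1))))]
        refine Finset.sum_congr rfl fun a ha => ?_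
        rw [Ck]
        simp only [Finset.mul_sum]

lemma Ck_succ (k m : ℕ) : Ck (k+1) (m+1) = wx * Ck (k+1) m + wy * Ck k (m+1) := by
  rw [Ck_conv, Ck_conv, Finset.sum_range_succ']
  simp only [pow_zero, one_mul, Nat.sub_zero, Nat.succ_sub_succ]
  rw [Finset.mul_sum]
  congr 1
  refine Finset.sum_congr rfl fun i hi => ?_
  rw [pow_succ', mul_assoc]

lemma Ck_zero_succ (m : ℕ) : Ck 0 (m+1) = wx * Ck 0 m + wx ^ (m+2) := by
  rw [Ck_zero_left, Ck_zero_left, succ_nsmul (wx ^ (m+2)) m, mul_smul_comm]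
  rw [← pow_succ']

/-- `Dk k m` is the `C`-correction with `k` rows (`0` if `k = 0`). -/
def Dk : ℕ → ℕ → Ht
  | 0, _ => 0
  | (K+1), m => Ck K m

lemma Dk_zero_right (k : ℕ) : Dk k 0 = 0 := by
  cases k with
  | zero => rfl
  | succ K => exact Ck_zero_right K

/-! ### The case `n = 0`: `x^m ⧢ₜ y^k = B - t C` -/

lemma T_eq : ∀ m k : ℕ, tshW (List.replicate m 0) (List.replicate k 1)
    = Bk k m - (Polynomial.X : Rt) • Dk k m := by
  intro m
  induction m with
  | zero =>
      intro k
      simp [tshW_nil_left, wd_replicate_y, Bk_zero_right, Dk_zero_right]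
  | succ m ihm =>
      intro k
      induction k with
      | zero =>
          simp [tshW_nil_right, wd_replicate_x, Bk_zero_left, Dk]
      | succ k ihk =>
          rw [List.replicate_succ (n := m), List.replicate_succ (n := k), tshW,
            ← List.replicate_succ (n := m), ← List.replicate_succ (n := k),
            ihm (k+1), ihk, ρt_zero, ρt_one]
          simp only [wd0, wd1]
          cases k with
          | zero =>
              rw [List.replicate_zero, δw_nil, Bk_succ 0 m]
              simp only [Dk, Ck_zero_succ, wd_replicate_x]
              simp only [zero_mul, smul_zero, sub_zero, one_smul, smul_add, mul_sub,
                mul_smul_comm, smul_mul_assoc, ← pow_succ']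
              abel
          | succ K =>
              rw [List.replicate_succ (n := K), δw_cons, Bk_succ (K+1) m]
              simp only [Dk, Ck_succ]
              simp only [zero_mul, smul_zero, sub_zero, zero_smul, smul_add, mul_sub,
                mul_smul_comm]
              abel

/-! ### The general case -/

lemma S_eq (k : ℕ) : ∀ m n : ℕ,
    tshW (List.replicate m 0) (List.replicate n 0 ++ List.replicate (k+1) 1)
      = ∑ p ∈ Finset.HasAntidiagonal.antidiagonal m, (((p.1 + n - 1).choose p.1 : ℕ) : Rt) •
          (wx ^ (p.1 + n) * (Bk (k+1) p.2 - (Polynomial.X : Rt) • Ck k p.2)) := by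
  intro m
  induction m with
  | zero =>
      intro n
      rw [List.replicate_zero, tshW_nil_left, wd_append, wd_replicate_x, wd_replicate_y,
        Finset.Nat.antidiagonal_zero, Finset.sum_singleton]
      simp [Bk_zero_right, Ck_zero_right]
  | succ m ihm =>
      intro n
      induction n with
      | zero =>
          rw [List.replicate_zero, List.nil_append, T_eq (m+1) (k+1)]
          symm
          rw [Finset.sum_eq_single_of_mem ((0:ℕ), m+1) (by simp)]
          · simp [Dk]
          · rintro ⟨a, b⟩ hab hne
            have h1 := Finset.HasAntidiagonal.mem_antidiagonal.mp hab
            have ha : 0 < a := by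
              rcases Nat.eq_zero_or_pos a with h | h
              · exfalso; apply hne; simp at h1 ⊢; omega
              · exact h
            rw [Nat.choose_eq_zero_of_lt (by omega)]
            simp
      | succ n ihn =>
          rw [List.replicate_succ (n := n), List.cons_append, List.replicate_succ (n := m),
            tshW, ← List.cons_append, ← List.replicate_succ (n := n),
            ← List.replicate_succ (n := m), ihm (n+1), ihn, ρt_zero]
          simp only [zero_mul, smul_zero, sub_zero, wd0]
          rw [Finset.mul_sum, Finset.mul_sum,
            Finset.Nat.sum_antidiagonal_succ (f := fun p : ℕ × ℕ =>
              wx * ((((p.1 + n - 1).choose p.1 : ℕ) : Rt) •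
                (wx ^ (p.1 + n) * (Bk (k+1) p.2 - (Polynomial.X : Rt) • Ck k p.2)))),
            Finset.Nat.sum_antidiagonal_succ (f := fun p : ℕ × ℕ =>
              (((p.1 + (n+1) - 1).choose p.1 : ℕ) : Rt) •
                (wx ^ (p.1 + (n+1)) * (Bk (k+1) p.2 - (Polynomial.X : Rt) • Ck k p.2)))]
          have h0 : wx * ((((0 + n - 1).choose 0 : ℕ) : Rt) •
              (wx ^ (0 + n) * (Bk (k+1) (m+1) - (Polynomial.X : Rt) • Ck k (m+1))))
              = (((0 + (n+1) - 1).choose 0 : ℕ) : Rt) •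
              (wx ^ (0 + (n+1)) * (Bk (k+1) (m+1) - (Polynomial.X : Rt) • Ck k (m+1))) := by
            simp only [Nat.choose_zero_right, Nat.cast_one, one_smul, Nat.zero_add,
              zero_add, pow_succ', mul_assoc]
          have hsum : ∀ p ∈ Finset.HasAntidiagonal.antidiagonal m,
              wx * ((((p.1 + (n+1) - 1).choose p.1 : ℕ) : Rt) •
                  (wx ^ (p.1 + (n+1)) * (Bk (k+1) p.2 - (Polynomial.X : Rt) • Ck k p.2)))
                + wx * ((((p.1 + 1 + n - 1).choose (p.1 + 1) : ℕ) : Rt) •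
                  (wx ^ (p.1 + 1 + n) * (Bk (k+1) p.2 - (Polynomial.X : Rt) • Ck k p.2)))
              = (((p.1 + 1 + (n+1) - 1).choose (p.1 + 1) : ℕ) : Rt) •
                  (wx ^ (p.1 + 1 + (n+1)) * (Bk (k+1) p.2 - (Polynomial.X : Rt) • Ck k p.2)) := by
            rintro ⟨a, b⟩ _
            simp only [mul_smul_comm, ← mul_assoc, ← pow_succ']
            rw [show a + (n+1) + 1 = a + 1 + (n+1) by omega,
              show a + 1 + n + 1 = a + 1 + (n+1) by omega,
              show a + (n+1) - 1 = a + n by omega,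
              show a + 1 + n - 1 = a + n by omega,
              show a + 1 + (n+1) - 1 = a + n + 1 by omega,
              ← add_smul, ← Nat.cast_add,
              show a + n + 1 = (a + n) + 1 from rfl,
              Nat.choose_succ_succ (a + n) a]
          calc (∑ p ∈ Finset.HasAntidiagonal.antidiagonal m,
                wx * ((((p.1 + (n+1) - 1).choose p.1 : ℕ) : Rt) •
                  (wx ^ (p.1 + (n+1)) * (Bk (k+1) p.2 - (Polynomial.X : Rt) • Ck k p.2))))
              + (wx * ((((0 + n - 1).choose 0 : ℕ) : Rt) •
                  (wx ^ (0 + n) * (Bk (k+1) (m+1) - (Polynomial.X : Rt) • Ck k (m+1))))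
                + ∑ p ∈ Finset.HasAntidiagonal.antidiagonal m,
                  wx * ((((p.1 + 1 + n - 1).choose (p.1 + 1) : ℕ) : Rt) •
                    (wx ^ (p.1 + 1 + n) * (Bk (k+1) p.2 - (Polynomial.X : Rt) • Ck k p.2))))
              = (((0 + (n+1) - 1).choose 0 : ℕ) : Rt) •
                  (wx ^ (0 + (n+1)) * (Bk (k+1) (m+1) - (Polynomial.X : Rt) • Ck k (m+1)))
                + ∑ p ∈ Finset.HasAntidiagonal.antidiagonal m,
                  (wx * ((((p.1 + (n+1) - 1).choose p.1 : ℕ) : Rt) •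
                    (wx ^ (p.1 + (n+1)) * (Bk (k+1) p.2 - (Polynomial.X : Rt) • Ck k p.2)))
                  + wx * ((((p.1 + 1 + n - 1).choose (p.1 + 1) : ℕ) : Rt) •
                    (wx ^ (p.1 + 1 + n) * (Bk (k+1) p.2 - (Polynomial.X : Rt) • Ck k p.2)))) := by
                rw [Finset.sum_add_distrib, h0]; abel
            _ = _ := by rw [Finset.sum_congr rfl hsum]

/-- For m, n ≥ 0 and k ≥ 1,
`x^m ⧢_t x^n y^k = Σ_{m₁+m₂=m} C(m₁+n−1,m₁) x^{m₁+n} (B_{k+1}^{m₂} − t C_k^{m₂−1})`,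
where `B_{k+1}^{m₂} = Σ_{a₁+⋯+a_{k+1}=m₂} x^{a₁}y⋯x^{a_k}yx^{a_{k+1}}` and
`C_k^{m₂−1} = Σ_{i=0}^{m₂−1} Σ_{a₁+⋯+a_k=i} x^{a₁}y⋯x^{a_{k−1}}yx^{a_k+m₂−i+1}`. -/
theorem tshuffle_xm_xnyk (m n k : ℕ) (hk : 1 ≤ k) :
    tshH (wx ^ m) (wx ^ n * wy ^ k) =
      ∑ p ∈ Finset.HasAntidiagonal.antidiagonal m,
        (((p.1 + n - 1).choose p.1 : ℕ) : Rt) •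
          (wx ^ (p.1 + n) *
            ((∑ c ∈ Finset.Nat.antidiagonalTuple (k + 1) p.2,
                (List.ofFn fun j : Fin k => wx ^ c j.castSucc * wy).prod * wx ^ c (Fin.last k)) -
              (Polynomial.X : Rt) •
                ∑ i ∈ Finset.range p.2, ∑ d ∈ Finset.Nat.antidiagonalTuple k i,
                  (List.ofFn fun j : Fin (k - 1) => wx ^ d (Fin.castLE (by omega) j) * wy).prod *
                    wx ^ (d ⟨k - 1, by omega⟩ + p.2 - i + 1))) := by
  obtain ⟨K, rfl⟩ : ∃ K, k = K + 1 := ⟨k - 1, by omega⟩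
  have h2 : wx ^ n * wy ^ (K+1) = wd (List.replicate n 0 ++ List.replicate (K+1) 1) := by
    rw [wd_append, wd_replicate_x, wd_replicate_y]
  rw [← wd_replicate_x m, h2, tshH_wd, S_eq K m n]
  rfl
end
end
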